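/- arXiv:2601.13321 — 5 statements merged into one kernel-verified Lean document; each statement's English description precedes it below -/
import Mathlib

section
/- Let κ and λ be infinite cardinals with κ regular, and assume λ^{<κ} = λ ≥ 𝔠. Then for every positively totally ordered monoid S there is no continuous weak λ⁺-measure space (ᵏλ, 𝔐, μ) on the generalized Baire space ᵏλ with μ taking values in S. -/
open Cardinal Set

noncomputable section

/-- The type of `ι`-indexed sequences in `A`, as a type synonym carrying the bounded topology. -/
def GSeq (ι A : Type) : Type := ι → A

/-- The bounded topology on `GSeq ι A`: the topology generated by the cones
`N_s = {y | ∀ i < b, y i = x i}`. -/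
instance GSeq.topologicalSpace (ι A : Type) [LinearOrder ι] : TopologicalSpace (GSeq ι A) :=
  TopologicalSpace.generateFrom
    {C : Set (GSeq ι A) | ∃ (x : ι → A) (b : ι), C = {y : GSeq ι A | ∀ i, i < b → y i = x i}}

/-- The weight of a topological space: the least cardinality of a basis for its topology. -/
def tweight (X : Type) [TopologicalSpace X] : Cardinal :=
  ⨅ B : {B : Set (Set X) // TopologicalSpace.IsTopologicalBasis B}, #↥(B.1)

/-- `S` is a positively totally ordered monoid (on top of given `AddMonoid` and `LinearOrder`
structures): the addition is weakly monotone in both arguments, `0` is the least element, and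
the positive cone `S⁺ = {a | 0 < a}` is nonempty. -/
structure IsPTOM (S : Type*) [AddMonoid S] [LinearOrder S] : Prop where
  add_le_add : ∀ a b c d : S, a ≤ b → c ≤ d → a + c ≤ b + d
  zero_le : ∀ a : S, 0 ≤ a
  exists_pos : ∃ a : S, 0 < a

/-- The sum of `f` over a finite set `F` of indices, taken in increasing order of the indices. -/
def finSum {ι : Type*} [LinearOrder ι] {S : Type*} [AddMonoid S] (f : ι → S) (F : Finset ι) : S :=
  ((F.sort (· ≤ ·)).map f).sum

/-- `μ` is a continuous measure: every singleton is measurable and has measure `0`. -/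
def MeasureContinuous {X : Type} [TopologicalSpace X] {S : Type*} [Zero S]
    (M : Set (Set X)) (μ : Set X → S) : Prop :=
  ∀ x : X, {x} ∈ M ∧ μ {x} = 0

/-- `(X, M, μ)` is a weak `λ⁺`-measure space (with `lam` playing the role of `λ`):
`M` contains all open sets and is closed under unions of at most `lam` many sets,
and `μ` satisfies the axioms (M1)-(M5). -/
structure IsWeakMeasureSpace (X : Type) [TopologicalSpace X] (lam : Cardinal)
    (S : Type*) [AddMonoid S] [LinearOrder S] (M : Set (Set X)) (μ : Set X → S) : Prop where
  open_mem : ∀ U : Set X, IsOpen U → U ∈ M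
  sUnion_mem : ∀ 𝒜 : Set (Set X), 𝒜 ⊆ M → #↥𝒜 ≤ lam → ⋃₀ 𝒜 ∈ M
  measure_empty : μ ∅ = 0
  measure_univ_pos : 0 < μ Set.univ
  mono : ∀ A B : Set X, A ∈ M → B ∈ M → A ⊆ B → μ A ≤ μ B
  additive : ∀ (γ : Ordinal) (A : γ.ToType → Set X), γ.card ≤ lam →
    (∀ i, A i ∈ M) → Pairwise (Function.onFun Disjoint A) →
    IsLUB {s : S | ∃ F : Finset γ.ToType, s = finSum (fun i => μ (A i)) F} (μ (⋃ i, A i))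
  point_reg : ∀ (x : X) (γ : Ordinal) (A : γ.ToType → Set X),
    {x} ∈ M → γ.card ≤ lam →
    (∀ i, IsOpen (A i) ∧ x ∈ A i) →
    (∀ U : Set X, IsOpen U → x ∈ U → ∃ i, A i ⊆ U) →
    IsGLB (Set.range fun i => μ (A i)) (μ {x})

namespace S1

def Cone {ι A : Type} [LinearOrder ι] (x : ι → A) (b : ι) : Set (GSeq ι A) :=
  {y | ∀ i, i < b → y i = x i}

section TOP
variable {ι A : Type} [LinearOrder ι]

lemma cone_open (x : ι → A) (b : ι) : IsOpen (Cone x b) :=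
  TopologicalSpace.GenerateOpen.basic _ ⟨x, b, rfl⟩

lemma mem_cone_self (x : GSeq ι A) (b : ι) : x ∈ Cone x b := fun _ _ => rfl

lemma cone_mono (x : ι → A) {b b' : ι} (h : b ≤ b') : Cone x b' ⊆ Cone x b :=
  fun _ hy i hi => hy i (lt_of_lt_of_le hi h)

lemma cone_congr {x y : ι → A} {b : ι} (h : ∀ i, i < b → x i = y i) : Cone x b = Cone y b := by
  ext z; exact ⟨fun hz i hi => (hz i hi).trans (h i hi), fun hz i hi => (hz i hi).trans (h i hi).symm⟩

lemma cone_eq_of_mem {x y : ι → A} {b : ι} (h : y ∈ Cone x b) : Cone x b = Cone y b :=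
  cone_congr fun i hi => (h i hi).symm

lemma cone_subset_of_mem {x z : ι → A} {b₀ b : ι} (h : x ∈ Cone z b₀) (hb : b₀ ≤ b) :
    Cone x b ⊆ Cone z b₀ := by
  rw [cone_eq_of_mem h]; exact cone_mono x hb

lemma cone_disjoint {x y : ι → A} {b b' i : ι} (hi : i < b) (hi' : i < b')
    (hne : x i ≠ y i) : Disjoint (Cone x b) (Cone y b') := by
  rw [Set.disjoint_left]
  intro z hz hz'
  exact hne ((hz i hi).symm.trans (hz' i hi'))

lemma exists_cone_subset [Nonempty ι] {U : Set (GSeq ι A)} (hU : IsOpen U)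
    (x : GSeq ι A) (hx : x ∈ U) : ∃ b, Cone x b ⊆ U := by
  have h : TopologicalSpace.GenerateOpen
      {C : Set (GSeq ι A) | ∃ (x : ι → A) (b : ι), C = {y : GSeq ι A | ∀ i, i < b → y i = x i}} U := hU
  clear hU
  revert hx
  induction h with
  | basic s hs =>
    obtain ⟨z, b, rfl⟩ := hs
    intro hx
    exact ⟨b, fun y hy i hi => (hy i hi).trans (hx i hi)⟩
  | univ => exact fun _ => ⟨Classical.arbitrary ι, Set.subset_univ _⟩
  | inter s t _ _ ihs iht =>
    intro hx
    obtain ⟨b1, hb1⟩ := ihs hx.1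
    obtain ⟨b2, hb2⟩ := iht hx.2
    exact ⟨max b1 b2, Set.subset_inter ((cone_mono x (le_max_left _ _)).trans hb1)
      ((cone_mono x (le_max_right _ _)).trans hb2)⟩
  | sUnion K _ ih =>
    intro hx
    obtain ⟨V, hVK, hxV⟩ := hx
    obtain ⟨b, hb⟩ := ih V hVK hxV
    exact ⟨b, hb.trans (Set.subset_sUnion_of_mem hVK)⟩

end TOP

-- ===== list lemmas =====
section LISTS
variable {S : Type} [AddMonoid S] [LinearOrder S] (hS : IsPTOM S)
include hS
set_option linter.unusedSectionVars false

lemma list_sum_le {ε : S} : ∀ l : List S, (∀ a ∈ l, a ≤ ε) → l.sum ≤ l.length • ε := by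
  intro l
  induction l with
  | nil => intro _; simp
  | cons a t ih =>
    intro h
    rw [List.sum_cons, List.length_cons, succ_nsmul']
    exact hS.add_le_add _ _ _ _ (h a List.mem_cons_self) (ih fun b hb => h b (List.mem_cons_of_mem a hb))

lemma list_le_sum {ε : S} : ∀ l : List S, (∀ a ∈ l, ε ≤ a) → l.length • ε ≤ l.sum := by
  intro l
  induction l with
  | nil => intro _; simp
  | cons a t ih =>
    intro h
    rw [List.sum_cons, List.length_cons, succ_nsmul']
    exact hS.add_le_add _ _ _ _ (h a List.mem_cons_self) (ih fun b hb => h b (List.mem_cons_of_mem a hb))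

lemma finSum_le_of_le {γ : Type} [LinearOrder γ] {g : γ → S} {ε c : S}
    (hle : ∀ j, g j ≤ ε) (hb : ∀ k : ℕ, k • ε ≤ c) (F : Finset γ) : finSum g F ≤ c := by
  refine le_trans (list_sum_le hS _ ?_) (hb _)
  intro a ha
  obtain ⟨j, _, rfl⟩ := List.mem_map.1 ha
  exact hle j

lemma finSum_eq_zero {γ : Type} [LinearOrder γ] {g : γ → S}
    (hz : ∀ j, g j = 0) (F : Finset γ) : finSum g F = 0 := by
  apply List.sum_eq_zero
  intro a ha
  obtain ⟨j, _, rfl⟩ := List.mem_map.1 ha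
  exact hz j

lemma le_finSum {γ : Type} [LinearOrder γ] {g : γ → S} {ε : S}
    (hge : ∀ j, ε ≤ g j) (F : Finset γ) : F.card • ε ≤ finSum g F := by
  have := list_le_sum hS (ε := ε) ((F.sort (· ≤ ·)).map g) ?_
  · rwa [List.length_map, Finset.length_sort] at this
  · intro a ha
    obtain ⟨j, _, rfl⟩ := List.mem_map.1 ha
    exact hge j

end LISTS

-- ===== countable enumeration helper =====

open Classical in
noncomputable def enumOf {A : Type} (s : Set A) : A → ℕ :=
  if h : s.Countable then
    (fun a => if ha : a ∈ s then (Set.countable_iff_exists_injective.mp h).choose ⟨a, ha⟩ else 0)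
  else fun _ => 0

lemma enumOf_inj {A : Type} {s : Set A} (hs : s.Countable) {a b : A} (ha : a ∈ s) (hb : b ∈ s)
    (h : enumOf s a = enumOf s b) : a = b := by
  rw [enumOf, dif_pos hs] at h
  simp only [dif_pos ha, dif_pos hb] at h
  have := (Set.countable_iff_exists_injective.mp hs).choose_spec h
  exact congrArg Subtype.val this

-- ===== measure context =====

structure Ctx (κ lam : Cardinal) (S : Type) [AddMonoid S] [LinearOrder S] where
  M : Set (Set (GSeq κ.ord.ToType lam.ord.ToType))
  μ : Set (GSeq κ.ord.ToType lam.ord.ToType) → S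
  hW : IsWeakMeasureSpace (GSeq κ.ord.ToType lam.ord.ToType) lam S M μ
  hC : MeasureContinuous M μ
  hS : IsPTOM S
  hκ : κ.IsRegular
  hlam : ℵ₀ ≤ lam
  hpow : lam ^< κ = lam
  hcont : Cardinal.continuum ≤ lam

namespace Ctx

variable {κ lam : Cardinal} {S : Type} [AddMonoid S] [LinearOrder S] (C : Ctx κ lam S)

set_option linter.unusedSectionVars false
include C

lemma kla : κ ≤ lam := by
  by_contra h
  push_neg at h
  have h1 : lam ^ lam ≤ lam ^< κ := Cardinal.le_powerlt lam h
  rw [C.hpow] at h1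
  have h2 : (2 : Cardinal) ^ lam ≤ lam ^ lam :=
    Cardinal.power_le_power_right ((Cardinal.nat_lt_aleph0 2).le.trans C.hlam)
  exact absurd ((Cardinal.cantor lam).trans_le (h2.trans h1)) (lt_irrefl _)

lemma nI : Nonempty κ.ord.ToType := by
  rw [Ordinal.toType_nonempty_iff_ne_zero]
  intro h
  have h2 : κ = 0 := by rw [← Cardinal.card_ord κ, h, Ordinal.card_zero]
  exact (aleph0_pos.trans_le C.hκ.aleph0_le).ne' h2

lemma nA : Nonempty lam.ord.ToType := by
  rw [Ordinal.toType_nonempty_iff_ne_zero]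
  intro h
  have h2 : lam = 0 := by rw [← Cardinal.card_ord lam, h, Ordinal.card_zero]
  exact (aleph0_pos.trans_le C.hlam).ne' h2

lemma cone_mem (x : κ.ord.ToType → lam.ord.ToType) (b : κ.ord.ToType) : Cone x b ∈ C.M :=
  C.hW.open_mem _ (cone_open x b)

lemma mu_mono {A B : Set (GSeq κ.ord.ToType lam.ord.ToType)} (hA : A ∈ C.M) (hB : B ∈ C.M)
    (h : A ⊆ B) : C.μ A ≤ C.μ B := C.hW.mono A B hA hB h

lemma mu_nonneg {A : Set (GSeq κ.ord.ToType lam.ord.ToType)} (hA : A ∈ C.M) : 0 ≤ C.μ A := by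
  have := C.hW.mono ∅ A (C.hW.open_mem _ isOpen_empty) hA (Set.empty_subset A)
  rwa [C.hW.measure_empty] at this

lemma m4 {I : Type} (hI : #I ≤ lam) (f : I → Set (GSeq κ.ord.ToType lam.ord.ToType))
    (hM : ∀ i, f i ∈ C.M) (hd : Pairwise (Function.onFun Disjoint f)) :
    ∃ (γ : Ordinal.{0}) (e : γ.ToType ≃ I),
      IsLUB {s : S | ∃ F : Finset γ.ToType, s = finSum (fun j => C.μ (f (e j))) F}
        (C.μ (⋃ i, f i)) := by
  refine ⟨(#I).ord, ?_⟩
  have hmk : #((#I).ord.ToType) = #I := Cardinal.mk_ord_toType _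
  obtain ⟨e⟩ := Cardinal.eq.1 hmk
  refine ⟨e, ?_⟩
  have hadd := C.hW.additive (#I).ord (f ∘ e)
    (by rw [Cardinal.card_ord]; exact hI) (fun j => hM _)
    (fun i j hij => hd (fun h => hij (e.injective h)))
  rwa [show (⋃ j, (f ∘ e) j) = ⋃ i, f i from e.surjective.iUnion_comp f] at hadd

lemma cone_drop (x : GSeq κ.ord.ToType lam.ord.ToType) {ε : S} (hε : 0 < ε) :
    ∃ b, C.μ (Cone x b) < ε := by
  haveI := C.nI
  have hglb := C.hW.point_reg x κ.ord (fun b => Cone x b) (C.hC x).1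
    (by rw [Cardinal.card_ord]; exact C.kla)
    (fun b => ⟨cone_open x b, mem_cone_self x b⟩)
    (fun U hU hx => exists_cone_subset hU x hx)
  rw [(C.hC x).2] at hglb
  by_contra h
  push_neg at h
  have : ε ∈ lowerBounds (Set.range fun b => C.μ (Cone x b)) := by
    rintro v ⟨b, rfl⟩
    exact h b
  exact absurd (hglb.2 this) (not_le.2 hε)

-- ===== node representatives and cardinality =====

def Canon (a₀ : lam.ord.ToType) : Set ((κ.ord.ToType → lam.ord.ToType) × κ.ord.ToType) :=
  {p | ∀ i, ¬ i < p.2 → p.1 i = a₀}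

omit C in
lemma mk_canon (hlam : ℵ₀ ≤ lam) (hpow : lam ^< κ = lam) (hkl : κ ≤ lam) (a₀ : lam.ord.ToType) :
    #(↥(Canon (κ := κ) a₀)) ≤ lam := by
  have hinj : Function.Injective
      (fun p : ↥(Canon (κ := κ) a₀) => (⟨p.1.2, fun i => p.1.1 i.1⟩ :
        Σ b : κ.ord.ToType, (↥(Set.Iio b) → lam.ord.ToType))) := by
    rintro ⟨⟨x, b⟩, hp⟩ ⟨⟨y, b'⟩, hq⟩ h
    obtain ⟨h1, h2⟩ := Sigma.mk.inj_iff.1 h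
    dsimp only at h1
    subst h1
    have h2' := (heq_iff_eq).1 h2
    have hxy : x = y := by
      funext i
      by_cases hi : i < b
      · exact congrFun h2' ⟨i, hi⟩
      · exact (hp i hi).trans (hq i hi).symm
    subst hxy
    rfl
  have h1 : #(↥(Canon (κ := κ) a₀)) ≤
      #(Σ b : κ.ord.ToType, (↥(Set.Iio b) → lam.ord.ToType)) := Cardinal.mk_le_of_injective hinj
  refine h1.trans ?_
  rw [Cardinal.mk_sigma]
  have h2 : ∀ b : κ.ord.ToType, #(↥(Set.Iio b) → lam.ord.ToType) ≤ lam := by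
    intro b
    have : #(↥(Set.Iio b) → lam.ord.ToType) = lam ^ #(↥(Set.Iio b)) := by
      rw [← Cardinal.power_def, Cardinal.mk_ord_toType]
    rw [this]
    calc lam ^ #(↥(Set.Iio b)) ≤ lam ^< κ := Cardinal.le_powerlt lam (Cardinal.mk_Iio_ord_toType b)
    _ = lam := hpow
  refine (Cardinal.sum_le_sum _ _ h2).trans ?_
  rw [Cardinal.sum_const', Cardinal.mk_ord_toType]
  calc κ * lam ≤ lam * lam := by exact mul_le_mul_left hkl lam
  _ = lam := Cardinal.mul_eq_self hlam

omit C in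
lemma trunc_canon (a₀ : lam.ord.ToType) (x : κ.ord.ToType → lam.ord.ToType) (b : κ.ord.ToType) :
    ((fun i => if i < b then x i else a₀), b) ∈ Canon (κ := κ) a₀ := by
  intro i hi
  exact if_neg hi

omit C in
lemma cone_trunc (a₀ : lam.ord.ToType) (x : κ.ord.ToType → lam.ord.ToType) {b b' : κ.ord.ToType}
    (h : b' ≤ b) : Cone (fun i => if i < b then x i else a₀) b' = Cone x b' :=
  cone_congr fun i hi => if_pos (lt_of_lt_of_le hi h)

lemma master (z : GSeq κ.ord.ToType lam.ord.ToType) (b₀ : κ.ord.ToType) (Q : S → Prop)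
    (hQd : ∀ v w : S, w ≤ v → Q v → Q w)
    (hBr : #(↥{x : GSeq κ.ord.ToType lam.ord.ToType |
        x ∈ Cone z b₀ ∧ ∀ b, b₀ ≤ b → ¬ Q (C.μ (Cone x b))}) ≤ lam)
    {c : S} (hub : ∀ l : List S, (∀ v ∈ l, Q v ∨ v = 0) → l.sum ≤ c) :
    C.μ (Cone z b₀) ≤ c := by
  haveI := C.nA
  haveI := C.nI
  classical
  set a₀ : lam.ord.ToType := Classical.arbitrary _ with ha₀
  set NR : Set ((κ.ord.ToType → lam.ord.ToType) × κ.ord.ToType) :=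
    {p | p ∈ Canon (κ := κ) a₀ ∧ (∀ i, i < b₀ → p.1 i = z i) ∧ b₀ ≤ p.2 ∧
      Q (C.μ (Cone p.1 p.2)) ∧ ∀ b, b₀ ≤ b → b < p.2 → ¬ Q (C.μ (Cone p.1 b))} with hNR
  set Br : Set (GSeq κ.ord.ToType lam.ord.ToType) :=
    {x : GSeq κ.ord.ToType lam.ord.ToType |
      x ∈ Cone z b₀ ∧ ∀ b, b₀ ≤ b → ¬ Q (C.μ (Cone x b))} with hBrdef
  set f : (↥NR ⊕ ↥Br) → Set (GSeq κ.ord.ToType lam.ord.ToType) :=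
    Sum.elim (fun p => Cone p.1.1 p.1.2) (fun x => {x.1}) with hf
  have hmem : ∀ i, f i ∈ C.M := by
    rintro (p | x)
    · exact C.cone_mem _ _
    · exact (C.hC x.1).1
  have hsub : ∀ i, f i ⊆ Cone z b₀ := by
    rintro (p | x)
    · exact cone_subset_of_mem (fun i hi => p.2.2.1 i hi) p.2.2.2.1
    · exact Set.singleton_subset_iff.2 x.2.1
  have hcover : Cone z b₀ ⊆ ⋃ i, f i := by
    intro x hx
    by_cases hex : ∃ b, b₀ ≤ b ∧ Q (C.μ (Cone x b))
    · have hwf : WellFoundedLT κ.ord.ToType := inferInstance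
      set s : Set κ.ord.ToType := {b | b₀ ≤ b ∧ Q (C.μ (Cone x b))} with hs
      have hsne : s.Nonempty := hex
      set b := hwf.wf.min s hsne with hb
      have hbmem : b ∈ s := hwf.wf.min_mem s hsne
      have hbmin : ∀ b', b' ∈ s → ¬ b' < b := fun b' h' => hwf.wf.not_lt_min s h'
      refine Set.mem_iUnion.2 ⟨Sum.inl ⟨((fun i => if i < b then x i else a₀), b), ?_⟩, ?_⟩
      · refine ⟨trunc_canon a₀ x b, ?_, hbmem.1, ?_, ?_⟩
        · intro i hi
          show (if i < b then x i else a₀) = z i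
          rw [if_pos (lt_of_lt_of_le hi hbmem.1)]
          exact hx i hi
        · rw [cone_trunc a₀ x le_rfl]
          exact hbmem.2
        · intro b' hb0 hb'
          rw [cone_trunc a₀ x hb'.le]
          intro hQ'
          exact hbmin b' ⟨hb0, hQ'⟩ hb'
      · intro i hi
        exact (if_pos hi).symm
    · push_neg at hex
      exact Set.mem_iUnion.2 ⟨Sum.inr ⟨x, hx, hex⟩, rfl⟩
  have hdisj : Pairwise (Function.onFun Disjoint f) := by
    have key : ∀ (p q : ↥NR), p.1.2 < q.1.2 →
        ¬ (Cone p.1.1 p.1.2 ∩ Cone q.1.1 q.1.2).Nonempty := by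
      rintro p q hlt ⟨w, hwp, hwq⟩
      have h1 : Cone p.1.1 p.1.2 = Cone w p.1.2 := cone_eq_of_mem hwp
      have h2 : Cone q.1.1 p.1.2 = Cone w p.1.2 :=
        cone_eq_of_mem (cone_mono q.1.1 hlt.le hwq)
      have hQp : Q (C.μ (Cone q.1.1 p.1.2)) := by
        rw [h2, ← h1]; exact p.2.2.2.2.1
      exact q.2.2.2.2.2 p.1.2 p.2.2.2.1 hlt hQp
    rintro (p | x) (q | y) hne
    · show Disjoint (Cone p.1.1 p.1.2) (Cone q.1.1 q.1.2)
      rcases lt_trichotomy p.1.2 q.1.2 with hlt | heq | hgt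
      · rw [Set.disjoint_iff_inter_eq_empty, ← Set.not_nonempty_iff_eq_empty]
        exact key p q hlt
      · by_contra hd
        rw [Set.not_disjoint_iff] at hd
        obtain ⟨w, hwp, hwq⟩ := hd
        have hpq : p.1.1 = q.1.1 := by
          funext i
          by_cases hi : i < p.1.2
          · exact (hwp i hi).symm.trans (hwq i (heq ▸ hi))
          · rw [p.2.1 i hi, q.2.1 i (heq ▸ hi)]
        apply hne
        apply congrArg Sum.inl
        exact Subtype.ext (Prod.ext hpq heq)
      · rw [Set.disjoint_iff_inter_eq_empty, ← Set.not_nonempty_iff_eq_empty]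
        intro hn
        exact key q p hgt ⟨hn.choose, hn.choose_spec.2, hn.choose_spec.1⟩
    · show Disjoint (Cone p.1.1 p.1.2) {y.1}
      rw [Set.disjoint_singleton_right]
      intro hy
      have h1 : Cone p.1.1 p.1.2 = Cone y.1 p.1.2 := cone_eq_of_mem hy
      have hQ' : Q (C.μ (Cone y.1 p.1.2)) := h1 ▸ p.2.2.2.2.1
      exact y.2.2 p.1.2 p.2.2.2.1 hQ'
    · show Disjoint {x.1} (Cone q.1.1 q.1.2)
      rw [Set.disjoint_singleton_left]
      intro hx
      have h1 : Cone q.1.1 q.1.2 = Cone x.1 q.1.2 := cone_eq_of_mem hx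
      have hQ' : Q (C.μ (Cone x.1 q.1.2)) := h1 ▸ q.2.2.2.2.1
      exact x.2.2 q.1.2 q.2.2.2.1 hQ'
    · show Disjoint ({x.1} : Set (GSeq κ.ord.ToType lam.ord.ToType)) {y.1}
      have hxy : x.1 ≠ y.1 := by
        intro h
        exact hne (congrArg Sum.inr (Subtype.ext h))
      exact Set.disjoint_singleton.2 hxy
  have hI : #(↥NR ⊕ ↥Br) ≤ lam := by
    have h1 : #(↥NR) ≤ lam :=
      (Cardinal.mk_le_mk_of_subset (fun p hp => hp.1)).trans
        (mk_canon C.hlam C.hpow C.kla a₀)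
    have h2 : #(↥NR ⊕ ↥Br) = #(↥NR) + #(↥Br) := by
      rw [Cardinal.mk_sum]; simp
    rw [h2]
    calc #(↥NR) + #(↥Br) ≤ lam + lam := add_le_add h1 hBr
    _ = lam := Cardinal.add_eq_self C.hlam
  obtain ⟨γ, e, hlub⟩ := C.m4 hI f hmem hdisj
  have hU : (⋃ i, f i) = Cone z b₀ := subset_antisymm (Set.iUnion_subset hsub) hcover
  rw [hU] at hlub
  refine hlub.2 ?_
  rintro s' ⟨F, rfl⟩
  refine hub _ ?_
  intro v hv
  obtain ⟨j, _, rfl⟩ := List.mem_map.1 hv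
  rcases he : e j with p | x
  · left
    exact p.2.2.2.2.1
  · right
    exact (C.hC x.1).2

lemma carrier (z : GSeq κ.ord.ToType lam.ord.ToType) (b₀ : κ.ord.ToType)
    (hpos : 0 < C.μ (Cone z b₀))
    (hsmall : #(↥{x : GSeq κ.ord.ToType lam.ord.ToType |
      x ∈ Cone z b₀ ∧ ∀ b, 0 < C.μ (Cone x b)}) ≤ lam) : False := by
  have hset : {x : GSeq κ.ord.ToType lam.ord.ToType |
      x ∈ Cone z b₀ ∧ ∀ b, b₀ ≤ b → ¬ ((fun v => v = 0) (C.μ (Cone x b)))} =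
      {x : GSeq κ.ord.ToType lam.ord.ToType | x ∈ Cone z b₀ ∧ ∀ b, 0 < C.μ (Cone x b)} := by
    ext x
    simp only [Set.mem_setOf_eq, and_congr_right_iff]
    intro _
    constructor
    · intro h1 b
      have h2 : 0 < C.μ (Cone x (max b b₀)) :=
        lt_of_le_of_ne (C.mu_nonneg (C.cone_mem _ _)) (Ne.symm (h1 _ (le_max_right _ _)))
      exact lt_of_lt_of_le h2 (C.mu_mono (C.cone_mem _ _) (C.cone_mem _ _)
        (cone_mono x (le_max_left _ _)))
    · intro h1 b _
      exact (h1 b).ne'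
  have hm := C.master z b₀ (fun v => v = 0)
    (fun v w hle hv => le_antisymm (hv ▸ hle) (C.hS.zero_le w))
    (by rw [hset]; exact hsmall)
    (c := 0)
    (fun l hl => le_of_eq (List.sum_eq_zero (fun v hv => (hl v hv).elim id id)))
  exact absurd hm (not_le.2 hpos)

lemma ordpos : 0 < κ.ord := by
  rcases (pos_iff_ne_zero (a := κ.ord)).symm with h
  apply pos_iff_ne_zero.2
  intro h0
  have h2 : κ = 0 := by rw [← Cardinal.card_ord κ, h0, Ordinal.card_zero]
  exact (aleph0_pos.trans_le C.hκ.aleph0_le).ne' h2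

lemma key1 {ε c : S} (hε : 0 < ε) (hc : c < C.μ Set.univ) : ¬ ∀ k : ℕ, k • ε ≤ c := by
  intro hall
  haveI := C.nI
  haveI := C.nA
  haveI : OrderBot κ.ord.ToType := Ordinal.toTypeOrderBot C.ordpos.ne'
  set z : GSeq κ.ord.ToType lam.ord.ToType := fun _ => Classical.arbitrary _ with hz
  have huniv : Cone z (⊥ : κ.ord.ToType) = Set.univ := by
    apply Set.eq_univ_iff_forall.2
    intro y i hi
    exact absurd hi (not_lt_bot)
  have hBr : {x : GSeq κ.ord.ToType lam.ord.ToType |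
      x ∈ Cone z (⊥ : κ.ord.ToType) ∧ ∀ b, ⊥ ≤ b → ¬ ((fun v => v < ε) (C.μ (Cone x b)))} = ∅ := by
    apply Set.eq_empty_iff_forall_notMem.2
    rintro x ⟨_, hbr⟩
    obtain ⟨b, hb⟩ := C.cone_drop x hε
    exact hbr b bot_le hb
  have hm := C.master z ⊥ (fun v => v < ε)
    (fun v w hle hv => lt_of_le_of_lt hle hv)
    (by rw [hBr]; simp)
    (c := c)
    (fun l hl => le_trans (list_sum_le C.hS l (fun v hv => (hl v hv).elim le_of_lt
      (fun h => h ▸ hε.le))) (hall _))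
  rw [huniv] at hm
  exact absurd hm (not_le.2 hc)

lemma no_inf_family {z : GSeq κ.ord.ToType lam.ord.ToType} {b₀ : κ.ord.ToType}
    (hlt : C.μ (Cone z b₀) < C.μ Set.univ) {ε : S} (hε : 0 < ε)
    (d : ℕ → ((κ.ord.ToType → lam.ord.ToType) × κ.ord.ToType))
    (hdsub : ∀ n, Cone (d n).1 (d n).2 ⊆ Cone z b₀)
    (hdd : Pairwise (Function.onFun Disjoint (fun n => Cone (d n).1 (d n).2)))
    (hdge : ∀ n, ε ≤ C.μ (Cone (d n).1 (d n).2)) : False := by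
  apply C.key1 hε hlt
  intro k
  have hmkn : #ℕ ≤ lam := by rw [Cardinal.mk_nat]; exact C.hlam
  obtain ⟨γ, e, hlub⟩ := C.m4 hmkn (fun n => Cone (d n).1 (d n).2)
    (fun n => C.cone_mem _ _) hdd
  set F : Finset γ.ToType := (Finset.range k).image e.symm with hF
  have hcard : F.card = k := by
    rw [hF, Finset.card_image_of_injective _ e.symm.injective, Finset.card_range]
  have h1 := le_finSum C.hS (g := fun j => C.μ (Cone (d (e j)).1 (d (e j)).2))
    (fun j => hdge _) F
  have h2 : finSum (fun j => C.μ (Cone (d (e j)).1 (d (e j)).2)) F ≤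
      C.μ (⋃ n, Cone (d n).1 (d n).2) := hlub.1 ⟨F, rfl⟩
  have h3 : C.μ (⋃ n, Cone (d n).1 (d n).2) ≤ C.μ (Cone z b₀) :=
    C.mu_mono (C.hW.open_mem _ (isOpen_iUnion (fun n => cone_open _ _)))
      (C.cone_mem _ _) (Set.iUnion_subset hdsub)
  rw [hcard] at h1
  exact h1.trans (h2.trans h3)

lemma exists_gt (i : κ.ord.ToType) : ∃ j, i < j := by
  haveI := Cardinal.noMaxOrder C.hκ.aleph0_le
  exact NoMaxOrder.exists_gt i

lemma split (w : (κ.ord.ToType → lam.ord.ToType) × κ.ord.ToType)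
    (hpos : 0 < C.μ (Cone w.1 w.2)) :
    ∃ p q : (κ.ord.ToType → lam.ord.ToType) × κ.ord.ToType,
      (Cone p.1 p.2 ⊆ Cone w.1 w.2) ∧ (Cone q.1 q.2 ⊆ Cone w.1 w.2) ∧
      Disjoint (Cone p.1 p.2) (Cone q.1 q.2) ∧
      0 < C.μ (Cone p.1 p.2) ∧ 0 < C.μ (Cone q.1 q.2) := by
  by_contra h
  apply C.carrier w.1 w.2 hpos
  have hss : {x : GSeq κ.ord.ToType lam.ord.ToType |
      x ∈ Cone w.1 w.2 ∧ ∀ b, 0 < C.μ (Cone x b)}.Subsingleton := by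
    intro x hx y hy
    by_contra hxy
    obtain ⟨i, hi⟩ : ∃ i, x i ≠ y i := by
      by_contra hh
      push_neg at hh
      exact hxy (funext hh)
    obtain ⟨j, hj⟩ := C.exists_gt i
    refine h ⟨(x, max j w.2), (y, max j w.2),
      cone_subset_of_mem hx.1 (le_max_right _ _),
      cone_subset_of_mem hy.1 (le_max_right _ _),
      cone_disjoint (lt_of_lt_of_le hj (le_max_left _ _))
        (lt_of_lt_of_le hj (le_max_left _ _)) hi,
      hx.2 _, hy.2 _⟩
  exact (Cardinal.mk_le_one_iff_set_subsingleton.2 hss).trans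
    (one_lt_aleph0.le.trans C.hlam)

lemma caseII (hII : ∀ g : ℕ → S, (∀ n, 0 < g n) → ∃ δ, 0 < δ ∧ ∀ n, δ ≤ g n)
    (z : GSeq κ.ord.ToType lam.ord.ToType) (b₀ : κ.ord.ToType)
    (hpos : 0 < C.μ (Cone z b₀)) (hlt : C.μ (Cone z b₀) < C.μ Set.univ) : False := by
  choose p q hp1 hq1 hdisj hp2 hq2 using C.split
  let T := {w : (κ.ord.ToType → lam.ord.ToType) × κ.ord.ToType //
      0 < C.μ (Cone w.1 w.2) ∧ Cone w.1 w.2 ⊆ Cone z b₀}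
  let step : T → T := fun w => ⟨q w.1 w.2.1, hq2 w.1 w.2.1, (hq1 w.1 w.2.1).trans w.2.2⟩
  let r : ℕ → T := fun n => step^[n] ⟨(z, b₀), hpos, subset_rfl⟩
  have hr : ∀ n, r (n+1) = step (r n) := fun n => Function.iterate_succ_apply' step n _
  let d : ℕ → (κ.ord.ToType → lam.ord.ToType) × κ.ord.ToType :=
    fun n => p (r n).1 (r n).2.1
  have hdsub : ∀ n, Cone (d n).1 (d n).2 ⊆ Cone (r n).1.1 (r n).1.2 := fun n => hp1 _ _
  have hchain : ∀ m n : ℕ, m ≤ n →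
      Cone (r n).1.1 (r n).1.2 ⊆ Cone (r m).1.1 (r m).1.2 := by
    intro m n h
    induction n, h using Nat.le_induction with
    | base => exact subset_rfl
    | succ n hmn ih =>
      refine subset_trans ?_ ih
      rw [hr n]
      exact hq1 _ _
  have hdd : Pairwise (Function.onFun Disjoint
      (fun n => Cone (d n).1 (d n).2)) := by
    have hkey : ∀ a b : ℕ, a < b →
        Disjoint (Cone (d a).1 (d a).2) (Cone (d b).1 (d b).2) := by
      intro a b hab
      have h1 : Cone (d b).1 (d b).2 ⊆ Cone (r (a+1)).1.1 (r (a+1)).1.2 :=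
        (hdsub b).trans (hchain (a+1) b hab)
      have h2 : Cone (r (a+1)).1.1 (r (a+1)).1.2 = Cone (q (r a).1 (r a).2.1).1
          (q (r a).1 (r a).2.1).2 := by rw [hr a]
      refine Disjoint.mono_right (h2 ▸ h1) ?_
      exact hdisj _ _
    intro a b hab
    rcases lt_or_gt_of_ne hab with h | h
    · exact hkey a b h
    · exact (hkey b a h).symm
  obtain ⟨δ, hδ, hdel⟩ := hII (fun n => C.μ (Cone (d n).1 (d n).2)) (fun n => hp2 _ _)
  exact C.no_inf_family hlt hδ d (fun n => (hdsub n).trans (r n).2.2) hdd hdel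

lemma caseIbig (hbig : ℵ₀ < κ) (f : ℕ → S) (hfpos : ∀ n, 0 < f n)
    (hfsmall : ∀ δ : S, 0 < δ → ∃ n, f n < δ)
    (x : GSeq κ.ord.ToType lam.ord.ToType) (hx : ∀ b, 0 < C.μ (Cone x b)) : False := by
  choose b hb using fun n => C.cone_drop x (hfpos n)
  set eI := Ordinal.ToType.mk (o := κ.ord) with heI
  set o : ℕ → Ordinal := fun n => (eI.symm (b n)).1 with ho'
  have ho : ∀ n, o n < κ.ord := fun n => Set.mem_Iio.1 (eI.symm (b n)).2
  have hsup : (⨆ n, o n) < κ.ord := by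
    apply Ordinal.iSup_lt_ord ?_ ho
    rw [Cardinal.mk_nat, C.hκ.cof_eq]
    exact hbig
  set b' := eI ⟨⨆ n, o n, Set.mem_Iio.2 hsup⟩ with hb'
  have hle : ∀ n, b n ≤ b' := by
    intro n
    have h1 : o n ≤ ⨆ n, o n := Ordinal.le_iSup o n
    have h2 : eI.symm (b n) ≤ ⟨⨆ n, o n, Set.mem_Iio.2 hsup⟩ := h1
    calc b n = eI (eI.symm (b n)) := (eI.apply_symm_apply _).symm
    _ ≤ b' := eI.le_iff_le.2 h2
  have hδ := hx b'
  obtain ⟨n, hn⟩ := hfsmall _ hδ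
  have hmono : C.μ (Cone x b') ≤ C.μ (Cone x (b n)) :=
    C.mu_mono (C.cone_mem _ _) (C.cone_mem _ _) (cone_mono x (hle n))
  exact absurd (hmono.trans_lt (hb n)) (not_lt.2 hn.le)

lemma caseIomega (hκω : κ = ℵ₀) (f : ℕ → S) (hfpos : ∀ n, 0 < f n)
    (hfsmall : ∀ δ : S, 0 < δ → ∃ n, f n < δ)
    (z : GSeq κ.ord.ToType lam.ord.ToType) (b₀ : κ.ord.ToType)
    (hpos : 0 < C.μ (Cone z b₀)) (hlt : C.μ (Cone z b₀) < C.μ Set.univ) : False := by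
  classical
  -- an order isomorphism ℕ ≃ κ.ord.ToType
  haveI hwo : IsWellOrder κ.ord.ToType (· < ·) := isWellOrder_lt
  have h3 : Ordinal.omega0 = κ.ord := by rw [hκω, Cardinal.ord_aleph0]
  have htype := Ordinal.type_nat_lt.trans (h3.trans (Ordinal.type_toType κ.ord).symm)
  obtain ⟨φ⟩ := Ordinal.type_eq.1 htype
  have φlt : ∀ {m n : ℕ}, φ m < φ n ↔ m < n := fun {m n} => φ.map_rel_iff
  have φle : ∀ {m n : ℕ}, φ m ≤ φ n ↔ m ≤ n := by
    intro m n
    rw [← not_lt, ← not_lt, φlt]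
  set n₀ : ℕ := φ.symm b₀ with hn₀
  have hφn₀ : φ n₀ = b₀ := φ.apply_symm_apply b₀
  set Y : (κ.ord.ToType → lam.ord.ToType) → ℕ → Set lam.ord.ToType :=
    fun x m => {a | 0 < C.μ (Cone (Function.update x (φ (n₀+m)) a) (φ (n₀+m+1)))} with hY
  set Br : Set (GSeq κ.ord.ToType lam.ord.ToType) :=
    {x : GSeq κ.ord.ToType lam.ord.ToType |
      x ∈ Cone z b₀ ∧ ∀ b, 0 < C.μ (Cone x b)} with hBr
  -- update preserves membership in the cone of (z, b₀)
  have hupd : ∀ x ∈ Br, ∀ m (a : lam.ord.ToType),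
      Function.update x (φ (n₀+m)) a ∈ Cone z b₀ := by
    intro x hx m a i hi
    have hine : i ≠ φ (n₀+m) := by
      intro h
      rw [h] at hi
      exact absurd (lt_of_lt_of_le hi (hφn₀ ▸ φle.2 (Nat.le_add_right n₀ m)))
        (lt_irrefl _)
    erw [Function.update_of_ne hine]
    exact hx.1 i hi
  have hb₀le : ∀ m : ℕ, b₀ ≤ φ (n₀+m+1) := by
    intro m
    rw [← hφn₀]
    exact φle.2 (Nat.le_add_right n₀ (m+1))
  -- countability of the successor sets
  have hYcount : ∀ x ∈ Br, ∀ m : ℕ, (Y x m).Countable := by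
    intro x hx m
    have hcov : Y x m ⊆ ⋃ k : ℕ,
        {a | f k ≤ C.μ (Cone (Function.update x (φ (n₀+m)) a) (φ (n₀+m+1)))} := by
      intro a ha
      obtain ⟨k, hk⟩ := hfsmall _ ha
      exact Set.mem_iUnion.2 ⟨k, hk.le⟩
    refine Set.Countable.mono hcov ?_
    apply Set.countable_iUnion
    intro k
    apply Set.Finite.countable
    by_contra hinf
    have hinf' : {a | f k ≤
        C.μ (Cone (Function.update x (φ (n₀+m)) a) (φ (n₀+m+1)))}.Infinite := hinf
    set g := hinf'.natEmbedding with hg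
    set dd : ℕ → ((κ.ord.ToType → lam.ord.ToType) × κ.ord.ToType) :=
      fun j => (Function.update x (φ (n₀+m)) (g j).1, φ (n₀+m+1)) with hdd
    have hii : φ (n₀+m) < φ (n₀+m+1) := φlt.2 (Nat.lt_succ_self _)
    refine C.no_inf_family hlt (hfpos k) dd ?_ ?_ ?_
    · intro j
      exact cone_subset_of_mem (hupd x hx m _) (hb₀le m)
    · intro j j' hjj
      have hgg : (g j).1 ≠ (g j').1 := by
        intro h
        exact hjj (g.injective (Subtype.ext h))
      refine cone_disjoint hii hii ?_
      show Function.update x (φ (n₀+m)) (g j).1 (φ (n₀+m)) ≠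
        Function.update x (φ (n₀+m)) (g j').1 (φ (n₀+m))
      erw [Function.update_self, Function.update_self]
      exact hgg
    · intro j
      exact (g j).2
  -- the coding map
  set F : ↥Br → (ℕ → ℕ) := fun x m => enumOf (Y x.1 m) (x.1 (φ (n₀+m))) with hF
  have hmemY : ∀ x : ↥Br, ∀ m : ℕ, x.1 (φ (n₀+m)) ∈ Y x.1 m := by
    intro x m
    show 0 < C.μ (Cone (Function.update x.1 (φ (n₀+m)) (x.1 (φ (n₀+m)))) (φ (n₀+m+1)))
    erw [Function.update_eq_self]
    exact x.2.2 _
  have hinj : Function.Injective F := by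
    intro x y hFxy
    apply Subtype.ext
    by_contra hne
    have hD : ∃ n, x.1 (φ n) ≠ y.1 (φ n) := by
      by_contra hh
      push_neg at hh
      apply hne
      funext i
      have : i = φ (φ.symm i) := (φ.apply_symm_apply i).symm
      rw [this]
      exact hh _
    set n₁ := Nat.find hD with hn₁def
    have hn₁ : x.1 (φ n₁) ≠ y.1 (φ n₁) := Nat.find_spec hD
    have hmin : ∀ k, k < n₁ → x.1 (φ k) = y.1 (φ k) := by
      intro k hk
      have := Nat.find_min hD hk
      exact not_not.1 this
    have hnn : n₀ ≤ n₁ := by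
      by_contra hcon
      push_neg at hcon
      have h1 : φ n₁ < b₀ := hφn₀ ▸ φlt.2 hcon
      exact hn₁ ((x.2.1 _ h1).trans (y.2.1 _ h1).symm)
    set m := n₁ - n₀ with hm'
    have hm : n₀ + m = n₁ := Nat.add_sub_cancel' hnn
    have hYeq : Y x.1 m = Y y.1 m := by
      ext a
      show 0 < C.μ (Cone (Function.update x.1 (φ (n₀+m)) a) (φ (n₀+m+1))) ↔
        0 < C.μ (Cone (Function.update y.1 (φ (n₀+m)) a) (φ (n₀+m+1)))
      rw [show Cone (Function.update x.1 (φ (n₀+m)) a) (φ (n₀+m+1)) =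
          Cone (Function.update y.1 (φ (n₀+m)) a) (φ (n₀+m+1)) from cone_congr ?_]
      intro i hi
      by_cases hieq : i = φ (n₀+m)
      · erw [hieq, Function.update_self, Function.update_self]
      · erw [Function.update_of_ne hieq, Function.update_of_ne hieq]
        have hik : i = φ (φ.symm i) := (φ.apply_symm_apply i).symm
        have hklt : φ.symm i < n₁ + 1 := by
          have h5 : φ (φ.symm i) < φ (n₀+m+1) := hik ▸ hi
          rw [hm] at h5
          exact φlt.1 h5
        have hkne : φ.symm i ≠ n₁ := by
          intro h
          apply hieq
          rw [hik, h, ← hm]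
        rw [hik]
        exact hmin _ (lt_of_le_of_ne (Nat.lt_succ_iff.1 hklt) hkne)
    have hcf : enumOf (Y x.1 m) (x.1 (φ (n₀+m))) = enumOf (Y y.1 m) (y.1 (φ (n₀+m))) :=
      congrFun hFxy m
    have h1 := hmemY x m
    have h2 := hmemY y m
    rw [← hYeq] at h2
    rw [← hYeq] at hcf
    have := enumOf_inj (hYcount x.1 x.2 m) h1 h2 hcf
    rw [hm] at this
    exact hn₁ this
  -- conclude via the carrier lemma
  apply C.carrier z b₀ hpos
  have hc1 : #(↥Br) ≤ #(ℕ → ℕ) := Cardinal.mk_le_of_injective hinj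
  have hc2 : #(ℕ → ℕ) = continuum := by
    rw [← Cardinal.power_def, Cardinal.mk_nat, Cardinal.power_self_eq le_rfl,
      Cardinal.two_power_aleph0]
  exact (hc1.trans_eq hc2).trans C.hcont

end Ctx
end S1

/-- if `κ` is regular, `λ` is infinite, `λ^{<κ} = λ ≥ 𝔠`, then there is no
continuous weak `λ⁺`-measure space on the generalized Baire space `ᵏλ` over any positively
totally ordered monoid. -/
theorem statement_1 (κ lam : Cardinal) (hκ : κ.IsRegular) (hlam : ℵ₀ ≤ lam)
    (hpow : lam ^< κ = lam) (hcont : Cardinal.continuum ≤ lam)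
    (S : Type) [AddMonoid S] [LinearOrder S] (hS : IsPTOM S) :
    ¬ ∃ (M : Set (Set (GSeq κ.ord.ToType lam.ord.ToType)))
        (μ : Set (GSeq κ.ord.ToType lam.ord.ToType) → S),
        IsWeakMeasureSpace (GSeq κ.ord.ToType lam.ord.ToType) lam S M μ ∧
          MeasureContinuous M μ := by
  rintro ⟨M, μ, hW, hC⟩
  set C : S1.Ctx κ lam S := ⟨M, μ, hW, hC, hS, hκ, hlam, hpow, hcont⟩ with hCdef
  haveI := C.nI
  haveI := C.nA
  haveI : OrderBot κ.ord.ToType := Ordinal.toTypeOrderBot C.ordpos.ne'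
  set z0 : GSeq κ.ord.ToType lam.ord.ToType := fun _ => Classical.arbitrary _ with hz0
  have huniv : S1.Cone z0 (⊥ : κ.ord.ToType) = Set.univ := by
    apply Set.eq_univ_iff_forall.2
    intro y i hi
    exact absurd hi (not_lt_bot)
  have hunivpos : 0 < C.μ (S1.Cone z0 (⊥ : κ.ord.ToType)) := by
    rw [huniv]
    exact hW.measure_univ_pos
  by_cases hT : ∃ x : GSeq κ.ord.ToType lam.ord.ToType, ∀ b, 0 < C.μ (S1.Cone x b)
  · obtain ⟨x₀, hx₀⟩ := hT
    obtain ⟨b₁, hb₁⟩ := C.cone_drop x₀ hW.measure_univ_pos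
    have hεpos : 0 < C.μ (S1.Cone x₀ b₁) := hx₀ b₁
    obtain ⟨bt, hbt⟩ := C.cone_drop x₀ hεpos
    have htpos : 0 < C.μ (S1.Cone x₀ bt) := hx₀ bt
    have htlt : C.μ (S1.Cone x₀ bt) < C.μ Set.univ := hbt.trans hb₁
    by_cases hE : ∃ f : ℕ → S, (∀ n, 0 < f n) ∧ ∀ δ : S, 0 < δ → ∃ n, f n < δ
    · obtain ⟨f, hf1, hf2⟩ := hE
      rcases hκ.aleph0_le.lt_or_eq with hbig | hκω
      · exact C.caseIbig hbig f hf1 hf2 x₀ hx₀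
      · exact C.caseIomega hκω.symm f hf1 hf2 x₀ bt htpos htlt
    · push_neg at hE
      exact C.caseII hE x₀ bt htpos htlt
  · push_neg at hT
    apply C.carrier z0 ⊥ hunivpos
    have hempty : {x : GSeq κ.ord.ToType lam.ord.ToType |
        x ∈ S1.Cone z0 (⊥ : κ.ord.ToType) ∧ ∀ b, 0 < C.μ (S1.Cone x b)} = ∅ := by
      apply Set.eq_empty_iff_forall_notMem.2
      rintro x ⟨_, hx⟩
      obtain ⟨b, hb⟩ := hT x
      exact absurd (hx b) (not_lt.2 hb)
    rw [hempty]
    simp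

end
end

section
/- Let λ be a cardinal with 2^{<λ} = λ > ω, and let Y be any subset of ᴧ2 (the set of functions from λ to 2) equipped with the bounded subspace topology. Then for every positively totally ordered monoid S there is no continuous weak λ⁺-measure space (Y, 𝔐, μ) with μ taking values in S. -/
open Cardinal Set

noncomputable section

namespace S2

section Cones

variable {ι A : Type} [LinearOrder ι]

/-- The cone of sequences agreeing with `x` below `b`. -/
def cone (x : GSeq ι A) (b : ι) : Set (GSeq ι A) := {y : GSeq ι A | ∀ i, i < b → y i = x i}

theorem isOpen_cone (x : GSeq ι A) (b : ι) : IsOpen (cone x b) :=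
  TopologicalSpace.isOpen_generateFrom_of_mem ⟨x, b, rfl⟩

theorem self_mem_cone (x : GSeq ι A) (b : ι) : x ∈ cone x b := fun _ _ => rfl

theorem cone_mono {x : GSeq ι A} {b b' : ι} (h : b ≤ b') : cone x b' ⊆ cone x b :=
  fun _ hy i hi => hy i (lt_of_lt_of_le hi h)

theorem cone_congr {x z : GSeq ι A} {b : ι} (hz : z ∈ cone x b) {b' : ι} (h : b' ≤ b) :
    cone z b' = cone x b' := by
  ext y
  constructor <;> intro hy i hi
  · rw [hy i hi]; exact hz i (lt_of_lt_of_le hi h)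
  · rw [hy i hi]; exact (hz i (lt_of_lt_of_le hi h)).symm

theorem exists_cone_subset [Nonempty ι] {V : Set (GSeq ι A)} (hV : IsOpen V) :
    ∀ x ∈ V, ∃ b, cone x b ⊆ V := by
  have hV' : TopologicalSpace.GenerateOpen
      {C : Set (GSeq ι A) | ∃ (x : ι → A) (b : ι),
        C = {y : GSeq ι A | ∀ i, i < b → y i = x i}} V := hV
  clear hV
  induction hV' with
  | basic C hC =>
      obtain ⟨x₀, b, rfl⟩ := hC
      intro x hx
      exact ⟨b, fun y hy i hi => (hy i hi).trans (hx i hi)⟩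
  | univ => exact fun x _ => ⟨Classical.arbitrary ι, subset_univ _⟩
  | inter U W _ _ ihU ihW =>
      intro x hx
      obtain ⟨b₁, h₁⟩ := ihU x hx.1
      obtain ⟨b₂, h₂⟩ := ihW x hx.2
      exact ⟨max b₁ b₂, fun y hy =>
        ⟨h₁ (cone_mono (le_max_left _ _) hy), h₂ (cone_mono (le_max_right _ _) hy)⟩⟩
  | sUnion 𝒮 _ ih =>
      intro x hx
      obtain ⟨U, hU𝒮, hxU⟩ := hx
      obtain ⟨b, hb⟩ := ih U hU𝒮 x hxU
      exact ⟨b, fun y hy => ⟨U, hU𝒮, hb hy⟩⟩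

variable (Y : Set (GSeq ι A))

/-- The trace on `Y` of the cone of base `x` (an arbitrary sequence) and level `b`. -/
def Kt (x : GSeq ι A) (b : ι) : Set ↥Y := Subtype.val ⁻¹' cone x b

theorem isOpen_Kt (x : GSeq ι A) (b : ι) : IsOpen (Kt Y x b) :=
  (isOpen_cone x b).preimage continuous_subtype_val

theorem mem_Kt {x : GSeq ι A} {b : ι} {y : ↥Y} : y ∈ Kt Y x b ↔ ∀ i, i < b → y.1 i = x i :=
  Iff.rfl

theorem self_mem_Kt (x : ↥Y) (b : ι) : x ∈ Kt Y x.1 b := fun _ _ => rfl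

theorem Kt_mono {x : GSeq ι A} {b b' : ι} (h : b ≤ b') : Kt Y x b' ⊆ Kt Y x b :=
  fun _ hy => cone_mono h hy

theorem Kt_congr {x : GSeq ι A} {z : ↥Y} {b : ι} (hz : z ∈ Kt Y x b) {b' : ι} (h : b' ≤ b) :
    Kt Y z.1 b' = Kt Y x b' := by
  unfold Kt
  rw [cone_congr hz h]

theorem exists_Kt_subset [Nonempty ι] {U : Set ↥Y} (hU : IsOpen U) {x : ↥Y} (hx : x ∈ U) :
    ∃ b, Kt Y x.1 b ⊆ U := by
  obtain ⟨V, hV, rfl⟩ := isOpen_induced_iff.mp hU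
  obtain ⟨b, hb⟩ := exists_cone_subset hV x.1 hx
  exact ⟨b, fun y hy => hb hy⟩

end Cones

section WO

variable {ι : Type} [LinearOrder ι] [WellFoundedLT ι]

/-- The least element satisfying `p`. -/
noncomputable def leastSuch (p : ι → Prop) (h : ∃ b, p b) : ι :=
  (IsWellFounded.wf (r := ((· < ·) : ι → ι → Prop))).min {b | p b} h

theorem leastSuch_spec (p : ι → Prop) (h : ∃ b, p b) : p (leastSuch p h) :=
  WellFounded.min_mem _ _ h

theorem leastSuch_le (p : ι → Prop) (h : ∃ b, p b) {b : ι} (hb : p b) : leastSuch p h ≤ b :=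
  not_lt.1 (WellFounded.not_lt_min (IsWellFounded.wf (r := ((· < ·) : ι → ι → Prop))) {b | p b} hb)

theorem not_of_lt_leastSuch (p : ι → Prop) (h : ∃ b, p b) {b : ι} (hb : b < leastSuch p h) :
    ¬ p b :=
  fun hp => absurd hb (not_lt.2 (leastSuch_le p h hp))

end WO


section Lists

variable {S : Type} [AddMonoid S] [LinearOrder S]

theorem _root_.IsPTOM.le_add_left (hS : IsPTOM S) (a b : S) : a ≤ b + a := by
  have h := hS.add_le_add 0 b a a (hS.zero_le b) le_rfl
  rwa [zero_add] at h

theorem _root_.IsPTOM.le_add_right (hS : IsPTOM S) (a b : S) : a ≤ a + b := by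
  have h := hS.add_le_add a a 0 b le_rfl (hS.zero_le b)
  rwa [add_zero] at h

theorem _root_.IsPTOM.listsum_le_nsmul (hS : IsPTOM S) {t : S} :
    ∀ {l : List S}, (∀ s ∈ l, s ≤ t) → l.sum ≤ l.length • t := by
  intro l
  induction l with
  | nil => intro _; simp only [List.sum_nil, List.length_nil, zero_nsmul, le_refl]
  | cons a l ih =>
      intro h
      rw [List.sum_cons, List.length_cons, succ_nsmul']
      exact hS.add_le_add _ _ _ _ (h a List.mem_cons_self)
        (ih fun s hs => h s (List.mem_cons_of_mem a hs))

theorem _root_.IsPTOM.nsmul_le_listsum (hS : IsPTOM S) {t : S} :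
    ∀ {l : List S}, (∀ s ∈ l, t ≤ s) → l.length • t ≤ l.sum := by
  intro l
  induction l with
  | nil => intro _; simp only [List.sum_nil, List.length_nil, zero_nsmul, le_refl]
  | cons a l ih =>
      intro h
      rw [List.sum_cons, List.length_cons, succ_nsmul']
      exact hS.add_le_add _ _ _ _ (h a List.mem_cons_self)
        (ih fun s hs => h s (List.mem_cons_of_mem a hs))

end Lists

section Main

variable {lam : Cardinal} {Y : Set (GSeq lam.ord.ToType (Fin 2))}
  {S : Type} [AddMonoid S] [LinearOrder S] {M : Set (Set ↥Y)} {μ : Set ↥Y → S}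

theorem Kt_mem_M (hW : IsWeakMeasureSpace ↥Y lam S M μ) (x : GSeq lam.ord.ToType (Fin 2))
    (b : lam.ord.ToType) : Kt Y x b ∈ M := hW.open_mem _ (isOpen_Kt Y x b)

theorem nonempty_index (hlam : ℵ₀ < lam) : Nonempty lam.ord.ToType := by
  rw [Ordinal.toType_nonempty_iff_ne_zero]
  intro h
  apply absurd hlam
  have hl : lam = 0 := by rw [← Cardinal.card_ord lam, h]; simp
  rw [hl]
  exact not_lt.2 zero_le

theorem glbK (hW : IsWeakMeasureSpace ↥Y lam S M μ) (hC : MeasureContinuous M μ)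
    (hlam : ℵ₀ < lam) (x : ↥Y) :
    IsGLB (Set.range fun b => μ (Kt Y x.1 b)) 0 := by
  haveI := nonempty_index (lam := lam) hlam
  have h := hW.point_reg x lam.ord (fun b => Kt Y x.1 b) (hC x).1
    (le_of_eq (Cardinal.card_ord lam))
    (fun b => ⟨isOpen_Kt Y x.1 b, self_mem_Kt Y x b⟩)
    (fun U hU hxU => exists_Kt_subset Y hU hxU)
  rwa [(hC x).2] at h

theorem exists_level_lt (hW : IsWeakMeasureSpace ↥Y lam S M μ) (hC : MeasureContinuous M μ)
    (hlam : ℵ₀ < lam) (x : ↥Y) {t : S} (ht : 0 < t) :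
    ∃ b, μ (Kt Y x.1 b) < t := by
  by_contra h
  push_neg at h
  have hmem : t ∈ lowerBounds (Set.range fun b => μ (Kt Y x.1 b)) := by
    rintro s ⟨b, rfl⟩; exact h b
  exact absurd ((glbK hW hC hlam x).2 hmem) (not_le.2 ht)

theorem lub_family (hW : IsWeakMeasureSpace ↥Y lam S M μ) (hlam : ℵ₀ < lam)
    (Pfam : Set (Set ↥Y)) (hcard : #↥Pfam ≤ lam)
    (hmem : ∀ p ∈ Pfam, p ∈ M) (hdis : Pfam.Pairwise Disjoint) :
    ∃ (γ : Ordinal.{0}) (A : γ.ToType → Set ↥Y), Function.Injective A ∧ (∀ i, A i ∈ Pfam) ∧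
      (∀ p ∈ Pfam, ∃ i, A i = p) ∧
      IsLUB {s : S | ∃ F : Finset γ.ToType, s = finSum (fun i => μ (A i)) F} (μ (⋃₀ Pfam)) := by
  obtain ⟨e⟩ : Nonempty ((#↥Pfam).ord.ToType ≃ ↥Pfam) := by
    rw [← Cardinal.eq, Cardinal.mk_toType, Cardinal.card_ord]
  refine ⟨(#↥Pfam).ord, fun i => (e i).1, ?_, fun i => (e i).2, ?_, ?_⟩
  · intro i j hij; exact e.injective (Subtype.ext hij)
  · intro p hp; exact ⟨e.symm ⟨p, hp⟩, by simp⟩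
  · have hU : (⋃ i, ((e i).1 : Set ↥Y)) = ⋃₀ Pfam := by
      ext z
      simp only [Set.mem_iUnion, Set.mem_sUnion]
      constructor
      · rintro ⟨i, hi⟩; exact ⟨(e i).1, (e i).2, hi⟩
      · rintro ⟨p, hp, hz⟩; exact ⟨e.symm ⟨p, hp⟩, by simpa using hz⟩
    have h := hW.additive (#↥Pfam).ord (fun i => (e i).1)
      (by rw [Cardinal.card_ord]; exact hcard)
      (fun i => hmem _ (e i).2) ?_
    · rwa [hU] at h
    · intro i j hij
      have hne : (e i).1 ≠ (e j).1 := fun hh => hij (e.injective (Subtype.ext hh))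
      exact hdis (e i).2 (e j).2 hne

theorem null_sUnion (hS : IsPTOM S) (hW : IsWeakMeasureSpace ↥Y lam S M μ) (hlam : ℵ₀ < lam)
    (Pfam : Set (Set ↥Y)) (hcard : #↥Pfam ≤ lam) (hmem : ∀ p ∈ Pfam, p ∈ M)
    (hdis : Pfam.Pairwise Disjoint) (hnull : ∀ p ∈ Pfam, μ p = 0) :
    μ (⋃₀ Pfam) = 0 := by
  obtain ⟨γ, A, hinj, hmemP, hsurj, hlub⟩ := lub_family hW hlam Pfam hcard hmem hdis
  have hset : {s : S | ∃ F : Finset γ.ToType, s = finSum (fun i => μ (A i)) F} = {0} := by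
    apply Set.Subset.antisymm
    · rintro s ⟨F, rfl⟩
      have hz : ∀ s' ∈ (F.sort (· ≤ ·)).map (fun i => μ (A i)), s' = 0 := by
        intro s' hs'
        obtain ⟨i, _, rfl⟩ := List.mem_map.1 hs'
        exact hnull _ (hmemP i)
      simpa [finSum] using List.sum_eq_zero hz
    · rintro s rfl
      exact ⟨∅, by simp [finSum]⟩
  rw [hset] at hlub
  exact hlub.unique isLUB_singleton

end Main


section Main2

variable {lam : Cardinal} {Y : Set (GSeq lam.ord.ToType (Fin 2))}
  {S : Type} [AddMonoid S] [LinearOrder S] {M : Set (Set ↥Y)} {μ : Set ↥Y → S}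

theorem le_finSum_bound {γt : Type} [LinearOrder γt] (hS : IsPTOM S) (f : γt → S)
    (iA iB : γt) (hall : ∀ i, i = iA ∨ i = iB) (h0 : f iA = 0) (F : Finset γt) :
    finSum f F ≤ f iB := by
  have key : ∀ l : List γt, l.Nodup → (l.map f).sum ≤ f iB := by
    intro l
    induction l with
    | nil => intro _; simpa using hS.zero_le (f iB)
    | cons a l ih =>
        intro hnd
        rw [List.map_cons, List.sum_cons]
        rcases hall a with ha | ha
        · rw [ha, h0, zero_add]
          exact ih (List.nodup_cons.1 hnd).2
        · rw [ha]
          have hz : (l.map f).sum = 0 := by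
            apply List.sum_eq_zero
            intro s hs
            obtain ⟨i, hil, rfl⟩ := List.mem_map.1 hs
            rcases hall i with hi | hi
            · rw [hi, h0]
            · exact absurd ((ha.trans hi.symm) ▸ hil) (List.nodup_cons.1 hnd).1
          rw [hz, add_zero]
  exact key _ (F.sort_nodup _)

theorem union_null_eq (hS : IsPTOM S) (hW : IsWeakMeasureSpace ↥Y lam S M μ)
    (hlam : ℵ₀ < lam) {A B : Set ↥Y} (hA : A ∈ M) (hB : B ∈ M)
    (hd : Disjoint A B) (hA0 : μ A = 0) : μ (A ∪ B) = μ B := by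
  by_cases hAB : A = B
  · subst hAB
    have hBe : A = ∅ := disjoint_self.1 hd
    rw [hBe]
    simp
  · have hcard : #↥({A, B} : Set (Set ↥Y)) ≤ lam := by
      have hfin : ({A, B} : Set (Set ↥Y)).Finite := (Set.finite_singleton B).insert A
      exact le_of_lt (lt_trans hfin.lt_aleph0 hlam)
    have hmem : ∀ p ∈ ({A, B} : Set (Set ↥Y)), p ∈ M := by rintro p (rfl | rfl) <;> assumption
    have hdis : ({A, B} : Set (Set ↥Y)).Pairwise Disjoint := by
      rintro p (rfl | rfl) q (rfl | rfl) hne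
      · exact absurd rfl hne
      · exact hd
      · exact hd.symm
      · exact absurd rfl hne
    obtain ⟨γ, Ae, hinj, hmemP, hsurj, hlub⟩ := lub_family hW hlam _ hcard hmem hdis
    obtain ⟨iA, hiA⟩ := hsurj A (by simp)
    obtain ⟨iB, hiB⟩ := hsurj B (by simp)
    have hall : ∀ i, i = iA ∨ i = iB := by
      intro i
      rcases (by simpa using hmemP i : Ae i = A ∨ Ae i = B) with h | h
      · exact Or.inl (hinj (h.trans hiA.symm))
      · exact Or.inr (hinj (h.trans hiB.symm))
    have hub : ∀ s ∈ {s : S | ∃ F : Finset γ.ToType, s = finSum (fun i => μ (Ae i)) F},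
        s ≤ μ B := by
      rintro s ⟨F, rfl⟩
      have h := le_finSum_bound hS (fun i => μ (Ae i)) iA iB hall
        (by show μ (Ae iA) = 0; rw [hiA]; exact hA0) F
      rwa [hiB] at h
    have hmemB : μ B ∈ {s : S | ∃ F : Finset γ.ToType, s = finSum (fun i => μ (Ae i)) F} := by
      refine ⟨{iB}, ?_⟩
      rw [finSum, Finset.sort_singleton]
      simp [hiB]
    have hgr : IsGreatest {s : S | ∃ F : Finset γ.ToType, s = finSum (fun i => μ (Ae i)) F}
        (μ B) := ⟨hmemB, hub⟩
    have heq := hlub.unique hgr.isLUB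
    rwa [show ⋃₀ ({A, B} : Set (Set ↥Y)) = A ∪ B from by
      rw [Set.sUnion_insert, Set.sUnion_singleton]] at heq

/-- The collection of all cone traces on `Y`. -/
def Kset : Set (Set ↥Y) := {C | ∃ (x : GSeq lam.ord.ToType (Fin 2)) (b : lam.ord.ToType), C = Kt Y x b}

theorem mk_Kset_le (hpow : (2 : Cardinal) ^< lam = lam) (hlam : ℵ₀ < lam) :
    #↥(Kset (Y := Y)) ≤ lam := by
  classical
  set g : (Σ b : lam.ord.ToType, (↥(Set.Iio b) → Fin 2)) → Set ↥Y :=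
    fun q => {y : ↥Y | ∀ i (h : i < q.1), y.1 i = q.2 ⟨i, h⟩} with hg
  have hsub : Kset (Y := Y) ⊆ Set.range g := by
    rintro C ⟨x, b, rfl⟩
    refine ⟨⟨b, fun i => x i.1⟩, ?_⟩
    ext y
    exact ⟨fun hy i hi => hy i hi, fun hy i hi => hy i hi⟩
  have h1 : #↥(Kset (Y := Y)) ≤ #↥(Set.range g) := Cardinal.mk_le_mk_of_subset hsub
  have h2 : #↥(Set.range g) ≤ #(Σ b : lam.ord.ToType, (↥(Set.Iio b) → Fin 2)) :=
    Cardinal.mk_range_le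
  have h3 : #(Σ b : lam.ord.ToType, (↥(Set.Iio b) → Fin 2)) ≤ lam := by
    rw [Cardinal.mk_sigma]
    calc Cardinal.sum (fun b : lam.ord.ToType => #(↥(Set.Iio b) → Fin 2))
        ≤ Cardinal.sum (fun _ : lam.ord.ToType => lam) := by
          apply Cardinal.sum_le_sum
          intro b
          have he : #(↥(Set.Iio b) → Fin 2) = (2 : Cardinal) ^ #↥(Set.Iio b) := by
            rw [← Cardinal.power_def, Cardinal.mk_fin]
            norm_cast
          rw [he]
          exact le_trans (Cardinal.le_powerlt 2 (Cardinal.mk_Iio_ord_toType b))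
            (le_of_eq hpow)
      _ = #(lam.ord.ToType) * lam := Cardinal.sum_const' _ _
      _ = lam * lam := by rw [Cardinal.mk_toType, Cardinal.card_ord]
      _ = lam := Cardinal.mul_eq_self (le_of_lt hlam)
  exact le_trans h1 (le_trans h2 h3)

section Exit

variable (p : lam.ord.ToType → S → Prop)
variable (hex : ∀ y : ↥Y, ∃ b, p b (μ (Kt Y y.1 b)))

/-- The first level at which `p` holds for the cone values along `y`. -/
noncomputable def eLvl (y : ↥Y) : lam.ord.ToType :=
  leastSuch (fun b => p b (μ (Kt Y y.1 b))) (hex y)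

/-- The exit cell of `y`. -/
noncomputable def cell (y : ↥Y) : Set ↥Y := Kt Y y.1 (eLvl p hex y)

theorem cell_spec (y : ↥Y) : p (eLvl p hex y) (μ (cell p hex y)) :=
  leastSuch_spec _ (hex y)

theorem eLvl_min (y : ↥Y) {b} (hb : b < eLvl p hex y) : ¬ p b (μ (Kt Y y.1 b)) :=
  not_of_lt_leastSuch _ (hex y) hb

theorem self_mem_cell (y : ↥Y) : y ∈ cell p hex y := self_mem_Kt Y y _

theorem eLvl_eq_of_mem {y z : ↥Y} (hz : z ∈ cell p hex y) : eLvl p hex z = eLvl p hex y := by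
  have hKt : ∀ b, b ≤ eLvl p hex y → Kt Y z.1 b = Kt Y y.1 b := fun b hb => Kt_congr Y hz hb
  apply le_antisymm
  · apply leastSuch_le
    show p _ (μ (Kt Y z.1 _))
    rw [hKt _ le_rfl]
    exact cell_spec p hex y
  · by_contra hlt
    push_neg at hlt
    have h1 := leastSuch_spec (fun b => p b (μ (Kt Y z.1 b))) (hex z)
    rw [show leastSuch (fun b => p b (μ (Kt Y z.1 b))) (hex z) = eLvl p hex z from rfl,
      hKt _ (le_of_lt hlt)] at h1
    exact eLvl_min p hex y hlt h1

theorem cell_eq_of_mem {y z : ↥Y} (hz : z ∈ cell p hex y) : cell p hex z = cell p hex y := by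
  unfold cell
  rw [eLvl_eq_of_mem p hex hz]
  exact Kt_congr Y hz le_rfl

theorem cell_eq_or_disjoint (y z : ↥Y) :
    cell p hex y = cell p hex z ∨ Disjoint (cell p hex y) (cell p hex z) := by
  by_cases h : Disjoint (cell p hex y) (cell p hex z)
  · exact Or.inr h
  · left
    obtain ⟨w, hwy, hwz⟩ := Set.not_disjoint_iff.1 h
    rw [← cell_eq_of_mem p hex hwy, ← cell_eq_of_mem p hex hwz]

theorem cellfam_facts (hW : IsWeakMeasureSpace ↥Y lam S M μ)
    (hpow : (2 : Cardinal) ^< lam = lam) (hlam : ℵ₀ < lam) :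
    (#↥{C | ∃ y : ↥Y, C = cell p hex y} ≤ lam) ∧
    (∀ C ∈ {C | ∃ y : ↥Y, C = cell p hex y}, C ∈ M) ∧
    {C | ∃ y : ↥Y, C = cell p hex y}.Pairwise Disjoint ∧
    ⋃₀ {C | ∃ y : ↥Y, C = cell p hex y} = Set.univ := by
  refine ⟨?_, ?_, ?_, ?_⟩
  · calc #↥{C | ∃ y : ↥Y, C = cell p hex y} ≤ #↥(Kset (Y := Y)) :=
        Cardinal.mk_le_mk_of_subset (by rintro C ⟨y, rfl⟩; exact ⟨y.1, eLvl p hex y, rfl⟩)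
      _ ≤ lam := mk_Kset_le hpow hlam
  · rintro C ⟨y, rfl⟩; exact hW.open_mem _ (isOpen_Kt Y _ _)
  · rintro C ⟨y, rfl⟩ C' ⟨y', rfl⟩ hne
    rcases cell_eq_or_disjoint p hex y y' with h | h
    · exact absurd h hne
    · exact h
  · apply Set.Subset.antisymm (Set.subset_univ _)
    intro y _
    exact ⟨cell p hex y, ⟨y, rfl⟩, self_mem_cell p hex y⟩

end Exit

end Main2


section Main3

variable {lam : Cardinal} {Y : Set (GSeq lam.ord.ToType (Fin 2))}
  {S : Type} [AddMonoid S] [LinearOrder S] {M : Set (Set ↥Y)} {μ : Set ↥Y → S}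

/-- The successor of an index. -/
noncomputable def nxt (hlam : ℵ₀ < lam) (b : lam.ord.ToType) : lam.ord.ToType :=
  haveI := Cardinal.noMaxOrder (le_of_lt hlam)
  leastSuch (fun i => b < i) (exists_gt b)

theorem lt_nxt (hlam : ℵ₀ < lam) (b : lam.ord.ToType) : b < nxt hlam b := by
  haveI := Cardinal.noMaxOrder (le_of_lt hlam)
  exact leastSuch_spec (fun i => b < i) (exists_gt b)

theorem le_of_lt_nxt (hlam : ℵ₀ < lam) {i b : lam.ord.ToType} (h : i < nxt hlam b) : i ≤ b := by
  haveI := Cardinal.noMaxOrder (le_of_lt hlam)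
  by_contra hbi
  push_neg at hbi
  exact absurd h (not_lt.2 (leastSuch_le (fun i => b < i) (exists_gt b) hbi))

/-- Flip a binary digit. -/
def flipv : Fin 2 → Fin 2 := fun v => 1 - v

theorem fin2_ne_iff : ∀ {a b : Fin 2}, a ≠ b ↔ a = flipv b := by decide

theorem flipv_ne : ∀ v : Fin 2, flipv v ≠ v := by decide

/-- The side set at level `b` along `x`: sequences agreeing with `x` below `b` and
differing at `b`. -/
def Bset (x : GSeq lam.ord.ToType (Fin 2)) (b : lam.ord.ToType) : Set ↥Y :=
  {y : ↥Y | (∀ i, i < b → y.1 i = x i) ∧ y.1 b ≠ x b}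

theorem Bset_eq_Kt (hlam : ℵ₀ < lam) (x : GSeq lam.ord.ToType (Fin 2)) (b : lam.ord.ToType) :
    Bset (Y := Y) x b = Kt Y (Function.update x b (flipv (x b))) (nxt hlam b) := by
  ext y
  constructor
  · rintro ⟨h1, h2⟩ i hi
    rcases lt_or_eq_of_le (le_of_lt_nxt hlam hi) with h | h
    · refine (?_ : y.1 i = x i).trans (Function.update_of_ne (ne_of_lt h) _ _).symm
      exact h1 i h
    · subst h
      refine (?_ : y.1 i = flipv (x i)).trans (Function.update_self (β := fun _ => Fin 2) i (flipv (x i)) x).symm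
      exact fin2_ne_iff.1 h2
  · intro hy
    constructor
    · intro i hi
      have h := hy i (lt_trans hi (lt_nxt hlam b))
      exact h.trans (Function.update_of_ne (ne_of_lt hi) _ _)
    · have h := hy b (lt_nxt hlam b)
      replace h := h.trans (Function.update_self _ _ _)
      rw [h]
      exact flipv_ne (x b)

theorem isOpen_Bset (hlam : ℵ₀ < lam) (x : GSeq lam.ord.ToType (Fin 2)) (b : lam.ord.ToType) :
    IsOpen (Bset (Y := Y) x b) := by
  rw [Bset_eq_Kt hlam]
  exact isOpen_Kt Y _ _

theorem Bset_subset_Kt (x : GSeq lam.ord.ToType (Fin 2)) (b : lam.ord.ToType) :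
    Bset (Y := Y) x b ⊆ Kt Y x b := fun _ hy => hy.1

theorem Bset_disjoint (x : GSeq lam.ord.ToType (Fin 2)) {b b' : lam.ord.ToType} (h : b ≠ b') :
    Disjoint (Bset (Y := Y) x b) (Bset (Y := Y) x b') := by
  rw [Set.disjoint_left]
  rintro y ⟨h1, h2⟩ ⟨h1', h2'⟩
  rcases lt_or_gt_of_ne h with hlt | hlt
  · exact h2 (h1' b hlt)
  · exact h2' (h1 b' hlt)

theorem Bset_disjoint_Kt (x : GSeq lam.ord.ToType (Fin 2)) {b b' : lam.ord.ToType} (h : b < b') :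
    Disjoint (Bset (Y := Y) x b) (Kt Y x b') := by
  rw [Set.disjoint_left]
  rintro y ⟨_, h2⟩ hy
  exact h2 (hy b h)

theorem mem_Bset_of_not_mem_Kt {x : GSeq lam.ord.ToType (Fin 2)} {y : ↥Y}
    {b b' : lam.ord.ToType} (hyb : y ∈ Kt Y x b) (hyb' : y ∉ Kt Y x b') :
    ∃ d, b ≤ d ∧ d < b' ∧ y ∈ Bset (Y := Y) x d := by
  have hne : ∃ i, y.1 i ≠ x i ∧ i < b' := by
    by_contra h
    push_neg at h
    exact hyb' fun i hi => by
      by_contra hne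
      exact absurd hi (not_lt.2 (h i hne))
  obtain ⟨iw, hiw1, hiw2⟩ := hne
  have hE : ∃ i, y.1 i ≠ x i := ⟨iw, hiw1⟩
  refine ⟨leastSuch (fun i => y.1 i ≠ x i) hE, ?_, ?_, ?_, ?_⟩
  · by_contra hlt
    push_neg at hlt
    exact leastSuch_spec (fun i => y.1 i ≠ x i) hE (hyb _ hlt)
  · exact lt_of_le_of_lt (leastSuch_le _ hE hiw1) hiw2
  · intro i hi
    exact not_not.1 (not_of_lt_leastSuch _ hE hi)
  · exact leastSuch_spec (fun i => y.1 i ≠ x i) hE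

theorem posB_cofinal (hS : IsPTOM S) (hW : IsWeakMeasureSpace ↥Y lam S M μ)
    (hC : MeasureContinuous M μ) (hlam : ℵ₀ < lam)
    {x : ↥Y} (hx : ∀ b, 0 < μ (Kt Y x.1 b)) :
    ∀ β, ∃ b, β ≤ b ∧ 0 < μ (Bset (Y := Y) x.1 b) := by
  intro β
  by_contra hcon
  push_neg at hcon
  have hB0 : ∀ b, β ≤ b → μ (Bset (Y := Y) x.1 b) = 0 := fun b hb =>
    le_antisymm (hcon b hb) (hS.zero_le _)
  have key : ∀ γ', β ≤ γ' → μ (Kt Y x.1 γ') = μ (Kt Y x.1 β) := by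
    intro γ' hγ'
    set 𝒩 : Set (Set ↥Y) := {C | ∃ b, β ≤ b ∧ b < γ' ∧ C = Bset (Y := Y) x.1 b} with h𝒩
    have hcard𝒩 : #↥𝒩 ≤ lam := by
      have hsub : 𝒩 ⊆ Set.range (fun b => Bset (Y := Y) x.1 b) := by
        rintro C ⟨b, _, _, rfl⟩; exact ⟨b, rfl⟩
      calc #↥𝒩 ≤ #↥(Set.range (fun b => Bset (Y := Y) x.1 b)) :=
            Cardinal.mk_le_mk_of_subset hsub
        _ ≤ #(lam.ord.ToType) := Cardinal.mk_range_le
        _ = lam := by rw [Cardinal.mk_toType, Cardinal.card_ord]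
    have hmem𝒩 : ∀ C ∈ 𝒩, C ∈ M := by
      rintro C ⟨b, _, _, rfl⟩
      exact hW.open_mem _ (isOpen_Bset hlam x.1 b)
    have hdis𝒩 : 𝒩.Pairwise Disjoint := by
      rintro C ⟨b, _, _, rfl⟩ C' ⟨b', _, _, rfl⟩ hne
      have hbb : b ≠ b' := fun h => hne (by rw [h])
      exact Bset_disjoint _ hbb
    have hnull : ∀ C ∈ 𝒩, μ C = 0 := by
      rintro C ⟨b, hb, _, rfl⟩
      exact hB0 b hb
    have hN0 : μ (⋃₀ 𝒩) = 0 := null_sUnion hS hW hlam _ hcard𝒩 hmem𝒩 hdis𝒩 hnull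
    have hNM : ⋃₀ 𝒩 ∈ M := hW.sUnion_mem _ (fun C hC => hmem𝒩 C hC) hcard𝒩
    have hdec : Kt Y x.1 β = (⋃₀ 𝒩) ∪ Kt Y x.1 γ' := by
      apply Set.Subset.antisymm
      · intro y hy
        by_cases hyγ : y ∈ Kt Y x.1 γ'
        · exact Or.inr hyγ
        · obtain ⟨d, hd1, hd2, hd3⟩ := mem_Bset_of_not_mem_Kt hy hyγ
          exact Or.inl ⟨Bset (Y := Y) x.1 d, ⟨d, hd1, hd2, rfl⟩, hd3⟩
      · rintro y (hy | hy)
        · obtain ⟨C, ⟨b, hb1, _, rfl⟩, hyC⟩ := hy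
          exact fun i hi => hyC.1 i (lt_of_lt_of_le hi hb1)
        · exact Kt_mono Y hγ' hy
    have hdisj : Disjoint (⋃₀ 𝒩) (Kt Y x.1 γ') := by
      rw [Set.disjoint_sUnion_left]
      rintro C ⟨b, _, hb2, rfl⟩
      exact Bset_disjoint_Kt _ hb2
    rw [hdec]
    exact (union_null_eq hS hW hlam hNM (Kt_mem_M hW _ _) hdisj hN0).symm
  have hlb : μ (Kt Y x.1 β) ∈ lowerBounds (Set.range fun b => μ (Kt Y x.1 b)) := by
    rintro s ⟨b, rfl⟩
    calc μ (Kt Y x.1 β) = μ (Kt Y x.1 (max b β)) := (key _ (le_max_right _ _)).symm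
      _ ≤ μ (Kt Y x.1 b) := hW.mono _ _ (Kt_mem_M hW _ _) (Kt_mem_M hW _ _)
          (Kt_mono Y (le_max_left _ _))
  have hle := (glbK hW hC hlam x).2 hlb
  exact absurd (le_antisymm hle (hS.zero_le _)) (ne_of_gt (hx β))

theorem countable_small (hS : IsPTOM S) (hW : IsWeakMeasureSpace ↥Y lam S M μ)
    (hlam : ℵ₀ < lam) {D : Set ↥Y} (hD : D ∈ M) {c : S}
    (hdom : ∀ t : S, 0 < t → ∃ k : ℕ, ¬ ((k : ℕ) • t ≤ c)) (hDc : μ D ≤ c)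
    (𝒞 : Set (Set ↥Y)) (hmem : ∀ C ∈ 𝒞, C ∈ M) (hsub : ∀ C ∈ 𝒞, C ⊆ D)
    (hpos : ∀ C ∈ 𝒞, 0 < μ C) (hdis : 𝒞.Pairwise Disjoint) (hcard : #↥𝒞 ≤ lam) :
    𝒞.Countable := by
  classical
  have hcover : 𝒞 ⊆ ⋃ k : ℕ, {C | C ∈ 𝒞 ∧ ¬ ((k : ℕ) • μ C ≤ c)} := by
    intro C hC
    obtain ⟨k, hk⟩ := hdom (μ C) (hpos C hC)
    exact Set.mem_iUnion.2 ⟨k, hC, hk⟩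
  refine Set.Countable.mono hcover (Set.countable_iUnion fun k => Set.Finite.countable ?_)
  by_contra hinf
  have hinf' : {C | C ∈ 𝒞 ∧ ¬ ((k : ℕ) • μ C ≤ c)}.Infinite := hinf
  obtain ⟨T, hTsub, hTcard⟩ := Set.Infinite.exists_subset_card_eq hinf' (k + 1)
  obtain ⟨γ, Ae, hinj, hmemP, hsurj, hlub⟩ := lub_family hW hlam 𝒞 hcard hmem hdis
  have hTsub𝒞 : ↑T ⊆ 𝒞 := fun C hC => (hTsub hC).1
  choose g hg using hsurj
  set F : Finset γ.ToType := T.attach.image (fun pt => g pt.1 (hTsub𝒞 pt.2)) with hF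
  have hinjg : Function.Injective (fun pt : {z // z ∈ T} => g pt.1 (hTsub𝒞 pt.2)) := by
    intro pt pt' h
    simp only at h
    apply Subtype.ext
    rw [← hg pt.1 (hTsub𝒞 pt.2), ← hg pt'.1 (hTsub𝒞 pt'.2)]
    exact congrArg Ae h
  have hFcard : F.card = k + 1 := by
    rw [hF, Finset.card_image_of_injective _ hinjg, Finset.card_attach, hTcard]
  have hFmem : ∀ i ∈ F, Ae i ∈ T := by
    intro i hi
    rw [hF] at hi
    obtain ⟨pt, _, rfl⟩ := Finset.mem_image.1 hi
    rw [hg pt.1 (hTsub𝒞 pt.2)]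
    exact pt.2
  have hTne : T.Nonempty := Finset.card_pos.1 (by rw [hTcard]; exact Nat.succ_pos k)
  obtain ⟨Cm, hCmT, hCmmin⟩ := T.exists_min_image μ hTne
  have hσle : finSum (fun i => μ (Ae i)) F ≤ μ (⋃₀ 𝒞) := hlub.1 ⟨F, rfl⟩
  have hU : μ (⋃₀ 𝒞) ≤ c :=
    le_trans (hW.mono _ _ (hW.sUnion_mem _ hmem hcard) hD (Set.sUnion_subset hsub)) hDc
  have hσge : (k + 1) • μ Cm ≤ finSum (fun i => μ (Ae i)) F := by
    rw [finSum]
    have hlen : ((F.sort (· ≤ ·)).map (fun i => μ (Ae i))).length = k + 1 := by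
      rw [List.length_map, Finset.length_sort, hFcard]
    rw [← hlen]
    apply hS.nsmul_le_listsum
    intro s hs
    obtain ⟨i, hil, rfl⟩ := List.mem_map.1 hs
    exact hCmmin _ (hFmem i (Finset.mem_sort (α := γ.ToType) (· ≤ ·) |>.1 hil))
  have h1 : ¬ ((k : ℕ) • μ Cm ≤ c) := (hTsub hCmT).2
  apply h1
  calc (k : ℕ) • μ Cm ≤ (k + 1) • μ Cm := by
        rw [succ_nsmul]
        exact hS.le_add_right _ _
    _ ≤ finSum (fun i => μ (Ae i)) F := hσge
    _ ≤ μ (⋃₀ 𝒞) := hσle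
    _ ≤ c := hU

end Main3


section Final

variable {lam : Cardinal} {Y : Set (GSeq lam.ord.ToType (Fin 2))}
  {S : Type} [AddMonoid S] [LinearOrder S] {M : Set (Set ↥Y)} {μ : Set ↥Y → S}

/-- The stage-`n` exit predicate used in the fusion argument. -/
def fpn (a1 : lam.ord.ToType) (tn : ℕ → S) (n : ℕ) : lam.ord.ToType → S → Prop :=
  fun b s => a1 ≤ b ∧ s < tn n

theorem fusion_contradiction (hS : IsPTOM S) (hW : IsWeakMeasureSpace ↥Y lam S M μ)
    (hC : MeasureContinuous M μ) (hpow : (2 : Cardinal) ^< lam = lam) (hlam : ℵ₀ < lam)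
    (x0 : ↥Y) (hx0 : ∀ b, 0 < μ (Kt Y x0.1 b)) (a1 : lam.ord.ToType)
    (hdom : ∀ t : S, 0 < t → ∃ k : ℕ, ¬ ((k : ℕ) • t ≤ μ (Kt Y x0.1 a1)))
    (tn : ℕ → S) (htn_pos : ∀ n, 0 < tn n)
    (hexn : ∀ n (y : ↥Y), ∃ b, fpn a1 tn n b (μ (Kt Y y.1 b)))
    (heLmono : ∀ (n : ℕ) (y : ↥Y),
      eLvl (fpn a1 tn n) (hexn n) y ≤ eLvl (fpn a1 tn (n + 1)) (hexn (n + 1)) y)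
    (htn_glb : ∀ w, w ∈ lowerBounds (Set.range tn) → w ≤ 0) : False := by
  classical
  set cl : ℕ → ↥Y → Set ↥Y := fun n y => cell (fpn a1 tn n) (hexn n) y with hcl
  have hcl_lt : ∀ n y, μ (cl n y) < tn n := by
    intro n y
    rw [hcl]
    exact (cell_spec (fpn a1 tn n) (hexn n) y).2
  have heL_a1 : ∀ n y, a1 ≤ eLvl (fpn a1 tn n) (hexn n) y := fun n y =>
    (cell_spec (fpn a1 tn n) (hexn n) y).1
  have hcl_mem_self : ∀ n y, y ∈ cl n y := by
    intro n y
    rw [hcl]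
    exact self_mem_cell _ _ y
  have hcl_open : ∀ n y, cl n y ∈ M := by
    intro n y
    rw [hcl]
    exact hW.open_mem _ (isOpen_Kt Y _ _)
  have hcl_mono : ∀ {n m : ℕ}, n ≤ m → ∀ y, cl m y ⊆ cl n y := by
    intro n m h y
    rw [hcl]
    have hee : ∀ {n m : ℕ}, n ≤ m →
        eLvl (fpn a1 tn n) (hexn n) y ≤ eLvl (fpn a1 tn m) (hexn m) y := by
      intro n m h
      induction h with
      | refl => exact le_rfl
      | step h ih => exact le_trans ih (heLmono _ y)
    exact Kt_mono Y (hee h)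
  have hcl_tr : ∀ (n : ℕ) {y z : ↥Y}, z ∈ cl n y → cl n z = cl n y := by
    intro n y z hz
    rw [hcl]
    exact cell_eq_of_mem _ _ (by rw [hcl] at hz; exact hz)
  have hcl_sub_D1 : ∀ n (y : ↥Y), y ∈ Kt Y x0.1 a1 → cl n y ⊆ Kt Y x0.1 a1 := by
    intro n y hy
    have h1 : cl n y ⊆ Kt Y y.1 a1 := by
      rw [hcl]
      exact Kt_mono Y (heL_a1 n y)
    rwa [Kt_congr Y hy le_rfl] at h1
  -- pieces
  set pc : ↥Y → Set ↥Y := fun y =>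
    if h : ∃ n, μ (cl n y) = 0 then cl (Nat.find h) y else ⋂ n, cl n y with hpc
  have hpc_mem_self : ∀ y, y ∈ pc y := by
    intro y
    rw [hpc]
    dsimp only
    split
    · exact hcl_mem_self _ y
    · exact Set.mem_iInter.2 fun n => hcl_mem_self n y
  have hpc_eq : ∀ {y w : ↥Y}, w ∈ pc y → pc w = pc y := by
    intro y w hw
    by_cases hy : ∃ n, μ (cl n y) = 0
    · rw [hpc] at hw ⊢
      dsimp only at hw ⊢
      rw [dif_pos hy] at hw
      have htr : ∀ n ≤ Nat.find hy, cl n w = cl n y := by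
        intro n hn
        exact hcl_tr n (hcl_mono hn y hw)
      have hNCw : ∃ n, μ (cl n w) = 0 := by
        refine ⟨Nat.find hy, ?_⟩
        rw [htr _ le_rfl]
        exact Nat.find_spec hy
      rw [dif_pos hNCw, dif_pos hy]
      have hle : Nat.find hNCw ≤ Nat.find hy := Nat.find_le (by
        rw [htr _ le_rfl]; exact Nat.find_spec hy)
      have hy0 : μ (cl (Nat.find hNCw) y) = 0 := by
        rw [← htr _ hle]
        exact Nat.find_spec hNCw
      have hge : Nat.find hy ≤ Nat.find hNCw := Nat.find_le hy0
      have heq : Nat.find hNCw = Nat.find hy := le_antisymm hle hge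
      rw [heq, htr _ le_rfl]
    · rw [hpc] at hw ⊢
      dsimp only at hw ⊢
      rw [dif_neg hy] at hw
      have htr : ∀ n, cl n w = cl n y := fun n => hcl_tr n (Set.mem_iInter.1 hw n)
      have hNCw : ¬ ∃ n, μ (cl n w) = 0 := by
        rintro ⟨n, hn⟩
        rw [htr n] at hn
        exact hy ⟨n, hn⟩
      rw [dif_neg hNCw, dif_neg hy]
      exact Set.iInter_congr htr
  have hpc_null : ∀ y : ↥Y, μ (pc y) = 0 ∧ pc y ∈ M := by
    intro y
    rw [hpc]
    dsimp only
    split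
    case isTrue h => exact ⟨Nat.find_spec h, hcl_open _ y⟩
    case isFalse h =>
      by_cases hbd : ∃ β, ∀ n, eLvl (fpn a1 tn n) (hexn n) y ≤ β
      · have hid : (⋂ n, cl n y) =
            Kt Y y.1 (leastSuch (fun β => ∀ n, eLvl (fpn a1 tn n) (hexn n) y ≤ β) hbd) := by
          apply Set.Subset.antisymm
          · intro z hz i hi
            have hni : ∃ n, ¬ (eLvl (fpn a1 tn n) (hexn n) y ≤ i) := by
              by_contra hcon
              push_neg at hcon
              exact absurd hi (not_lt.2 (leastSuch_le _ hbd hcon))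
            obtain ⟨n, hn⟩ := hni
            have hz' : z ∈ cl n y := Set.mem_iInter.1 hz n
            rw [hcl] at hz'
            exact hz' i (not_le.1 hn)
          · intro z hz
            apply Set.mem_iInter.2
            intro n
            rw [hcl]
            exact fun i hi => hz i (lt_of_lt_of_le hi (leastSuch_spec _ hbd n))
        rw [hid]
        refine ⟨?_, Kt_mem_M hW _ _⟩
        have hlow : μ (Kt Y y.1
            (leastSuch (fun β => ∀ n, eLvl (fpn a1 tn n) (hexn n) y ≤ β) hbd))
            ∈ lowerBounds (Set.range tn) := by
          rintro s ⟨n, rfl⟩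
          have hsub : Kt Y y.1
              (leastSuch (fun β => ∀ n, eLvl (fpn a1 tn n) (hexn n) y ≤ β) hbd) ⊆ cl n y := by
            rw [hcl]
            exact Kt_mono Y (leastSuch_spec _ hbd n)
          calc μ _ ≤ μ (cl n y) := hW.mono _ _ (Kt_mem_M hW _ _) (hcl_open n y) hsub
            _ ≤ tn n := le_of_lt (hcl_lt n y)
        exact le_antisymm (htn_glb _ hlow) (hS.zero_le _)
      · have hid : (⋂ n, cl n y) = {y} := by
          apply Set.Subset.antisymm
          · intro z hz
            have hzy : z = y := by
              apply Subtype.ext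
              funext i
              push_neg at hbd
              obtain ⟨n, hn⟩ := hbd i
              have hz' : z ∈ cl n y := Set.mem_iInter.1 hz n
              rw [hcl] at hz'
              exact hz' i hn
            rw [hzy]
            exact Set.mem_singleton y
          · intro z hz
            rw [Set.mem_singleton_iff] at hz
            subst hz
            exact Set.mem_iInter.2 fun n => hcl_mem_self n z
        rw [hid]
        exact ⟨(hC y).2, (hC y).1⟩
  -- the family of pieces
  set P : Set (Set ↥Y) := {C | ∃ y : ↥Y, y ∈ Kt Y x0.1 a1 ∧ C = pc y} with hP
  have hPmem : ∀ C ∈ P, C ∈ M := by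
    rintro C ⟨y, _, rfl⟩
    exact (hpc_null y).2
  have hPnull : ∀ C ∈ P, μ C = 0 := by
    rintro C ⟨y, _, rfl⟩
    exact (hpc_null y).1
  have hPdis : P.Pairwise Disjoint := by
    rintro C ⟨y, _, rfl⟩ C' ⟨y', _, rfl⟩ hne2
    rw [Set.disjoint_left]
    intro w hw hw'
    exact hne2 (by rw [← hpc_eq hw, hpc_eq hw'])
  have hPcover : ⋃₀ P = Kt Y x0.1 a1 := by
    apply Set.Subset.antisymm
    · rintro w ⟨C, ⟨y, hy, rfl⟩, hw⟩
      revert hw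
      rw [hpc]
      dsimp only
      split
      · intro hw
        exact hcl_sub_D1 _ y hy hw
      · intro hw
        exact hcl_sub_D1 0 y hy (Set.mem_iInter.1 hw 0)
    · intro y hy
      exact ⟨pc y, ⟨y, hy, rfl⟩, hpc_mem_self y⟩
  -- cardinality of the family
  have hPcard : #↥P ≤ lam := by
    have hnullside : #↥{C : Set ↥Y | ∃ y : ↥Y, (∃ n, μ (cl n y) = 0) ∧ C = pc y} ≤ lam := by
      refine le_trans (Cardinal.mk_le_mk_of_subset ?_) (mk_Kset_le (Y := Y) hpow hlam)
      rintro C ⟨y, h, rfl⟩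
      rw [hpc]
      dsimp only
      rw [dif_pos h]
      exact ⟨y.1, _, rfl⟩
    have hcapside : #↥{C : Set ↥Y | ∃ y : ↥Y, y ∈ Kt Y x0.1 a1 ∧
        ¬ (∃ n, μ (cl n y) = 0) ∧ C = pc y} ≤ lam := by
      set CP : ℕ → Set (Set ↥Y) := fun n =>
        {C | ∃ y : ↥Y, y ∈ Kt Y x0.1 a1 ∧ C = cl n y ∧ 0 < μ C} with hCP
      have hCPc : ∀ n, #↥(CP n) ≤ ℵ₀ := by
        intro n
        have hcnt : (CP n).Countable := by
          apply countable_small hS hW hlam (Kt_mem_M hW x0.1 a1) hdom le_rfl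
          · rintro C ⟨y, _, rfl, _⟩
            exact hcl_open n y
          · rintro C ⟨y, hy, rfl, _⟩
            exact hcl_sub_D1 n y hy
          · rintro C ⟨y, _, _, hpos⟩
            exact hpos
          · rintro C ⟨y, _, rfl, _⟩ C' ⟨y', _, rfl, _⟩ hne2
            rcases cell_eq_or_disjoint (fpn a1 tn n) (hexn n) y y' with h | h
            · exact absurd h hne2
            · exact h
          · refine le_trans (Cardinal.mk_le_mk_of_subset ?_) (mk_Kset_le (Y := Y) hpow hlam)
            rintro C ⟨y, _, rfl, _⟩
            exact ⟨y.1, _, rfl⟩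
        rw [Cardinal.mk_le_aleph0_iff]
        exact Set.countable_coe_iff.2 hcnt
      have hinj : #↥{C : Set ↥Y | ∃ y : ↥Y, y ∈ Kt Y x0.1 a1 ∧
          ¬ (∃ n, μ (cl n y) = 0) ∧ C = pc y} ≤ #(∀ n : ℕ, ↥(CP n)) := by
        have hrep : ∀ C : ↥{C : Set ↥Y | ∃ y : ↥Y, y ∈ Kt Y x0.1 a1 ∧
            ¬ (∃ n, μ (cl n y) = 0) ∧ C = pc y},
            ∃ y : ↥Y, y ∈ Kt Y x0.1 a1 ∧ ¬ (∃ n, μ (cl n y) = 0) ∧ C.1 = pc y :=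
          fun C => C.2
        choose yf hy1 hy2 hy3 using hrep
        have hmemCP : ∀ C n, cl n (yf C) ∈ CP n := by
          intro C n
          refine ⟨yf C, hy1 C, rfl, ?_⟩
          rcases lt_or_eq_of_le (hS.zero_le (μ (cl n (yf C)))) with h | h
          · exact h
          · exact absurd ⟨n, h.symm⟩ (hy2 C)
        apply Cardinal.mk_le_of_injective (f := fun C => fun n => (⟨cl n (yf C), hmemCP C n⟩ : ↥(CP n)))
        intro C C' hCC
        have hcle : ∀ n, cl n (yf C) = cl n (yf C') := fun n =>
          congrArg Subtype.val (congrFun hCC n)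
        apply Subtype.ext
        rw [hy3 C, hy3 C', hpc]
        dsimp only
        rw [dif_neg (hy2 C), dif_neg (hy2 C')]
        exact Set.iInter_congr hcle
      refine le_trans hinj ?_
      rw [Cardinal.mk_pi]
      calc Cardinal.prod (fun n : ℕ => #↥(CP n)) ≤ Cardinal.prod (fun _ : ℕ => ℵ₀) :=
            Cardinal.prod_le_prod _ _ hCPc
        _ = ℵ₀ ^ (ℵ₀ : Cardinal) := by rw [Cardinal.prod_const', Cardinal.mk_nat]
        _ ≤ (2 ^ (ℵ₀ : Cardinal)) ^ (ℵ₀ : Cardinal) :=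
            Cardinal.power_le_power_right (Cardinal.cantor ℵ₀).le
        _ = 2 ^ ((ℵ₀ : Cardinal) * ℵ₀) := by rw [← Cardinal.power_mul]
        _ = 2 ^ (ℵ₀ : Cardinal) := by rw [Cardinal.aleph0_mul_aleph0]
        _ ≤ 2 ^< lam := Cardinal.le_powerlt 2 hlam
        _ = lam := hpow
    have hsplit : P ⊆ {C : Set ↥Y | ∃ y : ↥Y, (∃ n, μ (cl n y) = 0) ∧ C = pc y} ∪
        {C : Set ↥Y | ∃ y : ↥Y, y ∈ Kt Y x0.1 a1 ∧ ¬ (∃ n, μ (cl n y) = 0) ∧ C = pc y} := by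
      rintro C ⟨y, hy, rfl⟩
      by_cases h : ∃ n, μ (cl n y) = 0
      · exact Or.inl ⟨y, h, rfl⟩
      · exact Or.inr ⟨y, hy, h, rfl⟩
    refine le_trans (Cardinal.mk_le_mk_of_subset hsplit)
      (le_trans (Cardinal.mk_union_le _ _)
        (le_trans (add_le_add hnullside hcapside)
          (le_of_eq (Cardinal.add_eq_self (le_of_lt hlam)))))
  have h0 := null_sUnion hS hW hlam P hPcard hPmem hPdis hPnull
  rw [hPcover] at h0
  exact absurd h0 (ne_of_gt (hx0 a1))

end Final


section Assembly

variable {lam : Cardinal} {Y : Set (GSeq lam.ord.ToType (Fin 2))}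
  {S : Type} [AddMonoid S] [LinearOrder S] {M : Set (Set ↥Y)} {μ : Set ↥Y → S}

theorem no_measure (hpow : (2 : Cardinal) ^< lam = lam) (hlam : ℵ₀ < lam)
    (hS : IsPTOM S) (hW : IsWeakMeasureSpace ↥Y lam S M μ) (hC : MeasureContinuous M μ) :
    False := by
  classical
  haveI hne : Nonempty lam.ord.ToType := nonempty_index hlam
  have hv0 : 0 < μ (Set.univ : Set ↥Y) := hW.measure_univ_pos
  -- Step A : there must be a point all of whose relative cones have positive measure
  by_cases hZ : ∃ x : ↥Y, ∀ b, 0 < μ (Kt Y x.1 b)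
  swap
  · push_neg at hZ
    have hex : ∀ y : ↥Y, ∃ b, (fun (_ : lam.ord.ToType) (s : S) => s = 0) b (μ (Kt Y y.1 b)) := by
      intro y
      obtain ⟨b, hb⟩ := hZ y
      exact ⟨b, le_antisymm hb (hS.zero_le _)⟩
    obtain ⟨hcard, hmem, hdis, hcover⟩ :=
      cellfam_facts (fun (_ : lam.ord.ToType) (s : S) => s = 0) hex hW hpow hlam
    have h0 := null_sUnion hS hW hlam _ hcard hmem hdis ?_
    · rw [hcover] at h0
      exact absurd h0 (ne_of_gt hv0)
    · rintro C ⟨y, rfl⟩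
      exact cell_spec (fun (_ : lam.ord.ToType) (s : S) => s = 0) hex y
  obtain ⟨x0, hx0⟩ := hZ
  obtain ⟨a1, ha1⟩ := exists_level_lt hW hC hlam x0 hv0
  -- Step B : some threshold is infinitely dominated by the small cone value
  by_cases hdom : ∃ t : S, 0 < t ∧ ∀ k : ℕ, (k : ℕ) • t ≤ μ (Kt Y x0.1 a1)
  · obtain ⟨t, ht, htk⟩ := hdom
    have hex2 : ∀ y : ↥Y, ∃ b, (fun (_ : lam.ord.ToType) (s : S) => s < t) b (μ (Kt Y y.1 b)) :=
      fun y => exists_level_lt hW hC hlam y ht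
    obtain ⟨hcard, hmem, hdis, hcover⟩ :=
      cellfam_facts (fun (_ : lam.ord.ToType) (s : S) => s < t) hex2 hW hpow hlam
    obtain ⟨γ, Ae, hinj, hmemP, hsurj, hlub⟩ := lub_family hW hlam _ hcard hmem hdis
    rw [hcover] at hlub
    have hub : μ (Set.univ : Set ↥Y) ≤ μ (Kt Y x0.1 a1) := by
      apply hlub.2
      rintro s ⟨F, rfl⟩
      calc finSum (fun i => μ (Ae i)) F
          ≤ ((F.sort (· ≤ ·)).map (fun i => μ (Ae i))).length • t := by
            show ((F.sort (· ≤ ·)).map (fun i => μ (Ae i))).sum ≤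
              ((F.sort (· ≤ ·)).map (fun i => μ (Ae i))).length • t
            apply hS.listsum_le_nsmul
            intro s hs
            obtain ⟨i, _, rfl⟩ := List.mem_map.1 hs
            show μ (Ae i) ≤ t
            obtain ⟨y, hy⟩ := hmemP i
            rw [hy]
            exact le_of_lt (cell_spec (fun (_ : lam.ord.ToType) (s : S) => s < t) hex2 y)
        _ ≤ μ (Kt Y x0.1 a1) := htk _
    exact absurd ha1 (not_lt.2 hub)
  -- Step C : archimedean case
  push_neg at hdom
  have hdom' : ∀ t : S, 0 < t → ∃ k : ℕ, ¬ ((k : ℕ) • t ≤ μ (Kt Y x0.1 a1)) := by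
    intro t ht
    obtain ⟨k, hk⟩ := hdom t ht
    exact ⟨k, not_le.2 hk⟩
  have hcof := posB_cofinal hS hW hC hlam hx0
  -- the countable cofinal set of levels with positive side sets
  have hCBc : {C : Set ↥Y | ∃ b, a1 ≤ b ∧ 0 < μ (Bset (Y := Y) x0.1 b) ∧
      C = Bset (Y := Y) x0.1 b}.Countable := by
    apply countable_small hS hW hlam (Kt_mem_M hW x0.1 a1) hdom' le_rfl
    · rintro C ⟨b, _, _, rfl⟩
      exact hW.open_mem _ (isOpen_Bset hlam _ _)
    · rintro C ⟨b, hb, _, rfl⟩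
      exact fun y hy => Kt_mono Y hb (Bset_subset_Kt _ _ hy)
    · rintro C ⟨b, _, hb, rfl⟩
      exact hb
    · rintro C ⟨b, _, _, rfl⟩ C' ⟨b', _, _, rfl⟩ hne2
      exact Bset_disjoint _ (fun h => hne2 (by rw [h]))
    · calc #↥{C : Set ↥Y | ∃ b, a1 ≤ b ∧ 0 < μ (Bset (Y := Y) x0.1 b) ∧
            C = Bset (Y := Y) x0.1 b}
          ≤ #↥(Set.range fun b => Bset (Y := Y) x0.1 b) :=
            Cardinal.mk_le_mk_of_subset (by rintro C ⟨b, _, _, rfl⟩; exact ⟨b, rfl⟩)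
        _ ≤ #(lam.ord.ToType) := Cardinal.mk_range_le
        _ = lam := by rw [Cardinal.mk_toType, Cardinal.card_ord]
  have hCBne : {C : Set ↥Y | ∃ b, a1 ≤ b ∧ 0 < μ (Bset (Y := Y) x0.1 b) ∧
      C = Bset (Y := Y) x0.1 b}.Nonempty := by
    obtain ⟨b, hb1, hb2⟩ := hcof a1
    exact ⟨_, ⟨b, hb1, hb2, rfl⟩⟩
  obtain ⟨Cn, hCn⟩ := Set.Countable.exists_eq_range hCBc hCBne
  have hbn : ∀ n : ℕ, ∃ b, a1 ≤ b ∧ 0 < μ (Bset (Y := Y) x0.1 b) ∧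
      Cn n = Bset (Y := Y) x0.1 b := by
    intro n
    have hh : Cn n ∈ {C : Set ↥Y | ∃ b, a1 ≤ b ∧ 0 < μ (Bset (Y := Y) x0.1 b) ∧
        C = Bset (Y := Y) x0.1 b} := by
      rw [hCn]
      exact ⟨n, rfl⟩
    exact hh
  choose bn hbn1 hbn2 hbn3 using hbn
  have hbn_cof : ∀ β, ∃ n, β ≤ bn n := by
    intro β
    obtain ⟨b, hb1, hb2⟩ := hcof (max β a1)
    have hbB : Bset (Y := Y) x0.1 b ∈ {C : Set ↥Y | ∃ b, a1 ≤ b ∧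
        0 < μ (Bset (Y := Y) x0.1 b) ∧ C = Bset (Y := Y) x0.1 b} :=
      ⟨b, le_trans (le_max_right _ _) hb1, hb2, rfl⟩
    rw [hCn] at hbB
    obtain ⟨n, hn⟩ := hbB
    have hbeq : bn n = b := by
      by_contra hne2
      have hd := Bset_disjoint (Y := Y) x0.1 hne2
      rw [← hbn3 n, hn, disjoint_self, Set.bot_eq_empty] at hd
      rw [hd, hW.measure_empty] at hb2
      exact lt_irrefl _ hb2
    exact ⟨n, hbeq ▸ le_trans (le_max_left _ _) hb1⟩
  -- monotone cofinal levels
  set lv : ℕ → lam.ord.ToType :=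
    fun n => Nat.rec (max (bn 0) a1) (fun m ih => max (bn (m + 1)) ih) n with hlv
  have hlv_zero : lv 0 = max (bn 0) a1 := rfl
  have hlv_succ : ∀ n, lv (n + 1) = max (bn (n + 1)) (lv n) := fun n => rfl
  have hlv_mono : Monotone lv := monotone_nat_of_le_succ (fun n => by
    rw [hlv_succ]
    exact le_max_right _ _)
  have hlv_bn : ∀ n, bn n ≤ lv n := by
    intro n
    cases n with
    | zero => rw [hlv_zero]; exact le_max_left _ _
    | succ n => rw [hlv_succ]; exact le_max_left _ _
  have hlv_cof : ∀ b, ∃ n, b ≤ lv n := by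
    intro b
    obtain ⟨n, hn⟩ := hbn_cof b
    exact ⟨n, le_trans hn (hlv_bn n)⟩
  -- the scale
  set tn : ℕ → S := fun n => μ (Kt Y x0.1 (lv n)) with htn
  have htn_pos : ∀ n, 0 < tn n := fun n => hx0 _
  have htn_anti : ∀ {n m : ℕ}, n ≤ m → tn m ≤ tn n := fun {n m} h =>
    hW.mono _ _ (Kt_mem_M hW _ _) (Kt_mem_M hW _ _) (Kt_mono Y (hlv_mono h))
  have htn_glb : ∀ w, w ∈ lowerBounds (Set.range tn) → w ≤ 0 := by
    intro w hw
    apply (glbK hW hC hlam x0).2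
    rintro s ⟨b, rfl⟩
    obtain ⟨n, hn⟩ := hlv_cof b
    exact le_trans (hw ⟨n, rfl⟩)
      (hW.mono _ _ (Kt_mem_M hW _ _) (Kt_mem_M hW _ _) (Kt_mono Y hn))
  -- exit levels exist at every stage
  have hexn : ∀ n (y : ↥Y), ∃ b, fpn a1 tn n b (μ (Kt Y y.1 b)) := by
    intro n y
    obtain ⟨b, hb⟩ := exists_level_lt hW hC hlam y (htn_pos n)
    refine ⟨max b a1, le_max_right _ _, ?_⟩
    exact lt_of_le_of_lt
      (hW.mono _ _ (Kt_mem_M hW _ _) (Kt_mem_M hW _ _) (Kt_mono Y (le_max_left _ _))) hb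
  have heLmono : ∀ (n : ℕ) (y : ↥Y),
      eLvl (fpn a1 tn n) (hexn n) y ≤ eLvl (fpn a1 tn (n + 1)) (hexn (n + 1)) y := by
    intro n y
    apply leastSuch_le
    refine ⟨(cell_spec (fpn a1 tn (n + 1)) (hexn (n + 1)) y).1, ?_⟩
    exact lt_of_lt_of_le (cell_spec (fpn a1 tn (n + 1)) (hexn (n + 1)) y).2
      (htn_anti (Nat.le_succ n))
  exact fusion_contradiction hS hW hC hpow hlam x0 hx0 a1 hdom' tn htn_pos hexn heLmono htn_glb

end Assembly

end S2

/-- if `2^{<λ} = λ > ω` and `Y ⊆ ᴧ2` (with the bounded subspace topology), then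
there is no continuous weak `λ⁺`-measure space on `Y` over any positively totally ordered
monoid. -/
theorem statement_2 (lam : Cardinal) (hpow : (2 : Cardinal) ^< lam = lam) (hlam : ℵ₀ < lam)
    (Y : Set (GSeq lam.ord.ToType (Fin 2)))
    (S : Type) [AddMonoid S] [LinearOrder S] (hS : IsPTOM S) :
    ¬ ∃ (M : Set (Set ↥Y)) (μ : Set ↥Y → S),
        IsWeakMeasureSpace ↥Y lam S M μ ∧ MeasureContinuous M μ := by
  rintro ⟨M, μ, hW, hC⟩
  exact S2.no_measure hpow hlam hS hW hC

end
end

section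
/- Let κ and λ be infinite cardinals with κ regular and κ ≤ λ, let X ⊆ ᵏλ be a subspace of weight at most λ, and let S be a positively totally ordered monoid with Deg(S) ≠ κ. Let (X, 𝔐, μ) be a weak λ⁺-measure space with μ taking values in S, and let U ⊆ X be an open set with μ(U) > 0. Then there is x ∈ U such that either {x} ∉ 𝔐 or μ({x}) > 0. -/
open Cardinal Set

noncomputable section

namespace GSeq

variable {ι A : Type} [LinearOrder ι]

/-- The cone of `x` at bound `b`. -/
def cone (x : GSeq ι A) (b : ι) : Set (GSeq ι A) := {y : GSeq ι A | ∀ i, i < b → y i = x i}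

theorem mem_cone_self (x : GSeq ι A) (b : ι) : x ∈ cone x b := fun _ _ => rfl

theorem cone_anti (x : GSeq ι A) {b b' : ι} (h : b ≤ b') : cone x b' ⊆ cone x b :=
  fun _ hy i hi => hy i (lt_of_lt_of_le hi h)

theorem cone_eq_of_mem {x z : GSeq ι A} {b : ι} (hz : z ∈ cone x b) : cone z b = cone x b := by
  ext y
  constructor <;> intro hy i hi
  · rw [hy i hi, hz i hi]
  · rw [hy i hi, ← hz i hi]

theorem isOpen_cone (x : GSeq ι A) (b : ι) : IsOpen (cone x b) :=
  TopologicalSpace.GenerateOpen.basic _ ⟨x, b, rfl⟩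

theorem exists_cone_subset [Nonempty ι] {W : Set (GSeq ι A)} (hW : IsOpen W) :
    ∀ z ∈ W, ∃ b, cone z b ⊆ W := by
  have hW' : TopologicalSpace.GenerateOpen
      {C : Set (GSeq ι A) | ∃ (x : ι → A) (b : ι), C = {y : GSeq ι A | ∀ i, i < b → y i = x i}}
      W := hW
  clear hW
  induction hW' with
  | basic C hC =>
    obtain ⟨x, b, rfl⟩ := hC
    intro z hz
    exact ⟨b, fun y hy i hi => (hy i hi).trans (hz i hi)⟩
  | univ => exact fun z _ => ⟨Classical.arbitrary ι, fun _ _ => trivial⟩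
  | inter s t _ _ ihs iht =>
    intro z hz
    obtain ⟨b1, h1⟩ := ihs z hz.1
    obtain ⟨b2, h2⟩ := iht z hz.2
    exact ⟨max b1 b2, fun y hy =>
      ⟨h1 (cone_anti z (le_max_left _ _) hy), h2 (cone_anti z (le_max_right _ _) hy)⟩⟩
  | sUnion 𝒮 _ ih =>
    intro z hz
    obtain ⟨s, hs, hzs⟩ := hz
    obtain ⟨b, hb⟩ := ih s hs z hzs
    exact ⟨b, hb.trans (subset_sUnion_of_mem hs)⟩

theorem cone_nested {x x' w : GSeq ι A} {b b' : ι} (hb : b ≤ b')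
    (hw : w ∈ cone x b) (hw' : w ∈ cone x' b') : cone x' b' ⊆ cone x b := by
  intro y hy i hi
  rw [hy i (lt_of_lt_of_le hi hb), ← hw' i (lt_of_lt_of_le hi hb), hw i hi]

/-- The cone of a point of a subspace `X`, within the subspace. -/
def coneX (X : Set (GSeq ι A)) (x : ↥X) (b : ι) : Set ↥X :=
  Subtype.val ⁻¹' cone x.val b

theorem mem_coneX_self (X : Set (GSeq ι A)) (x : ↥X) (b : ι) : x ∈ coneX X x b :=
  mem_cone_self _ _

theorem coneX_anti (X : Set (GSeq ι A)) (x : ↥X) {b b' : ι} (h : b ≤ b') :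
    coneX X x b' ⊆ coneX X x b :=
  Set.preimage_mono (cone_anti _ h)

theorem isOpen_coneX (X : Set (GSeq ι A)) (x : ↥X) (b : ι) : IsOpen (coneX X x b) :=
  (isOpen_cone _ _).preimage continuous_subtype_val

theorem exists_coneX_subset [Nonempty ι] (X : Set (GSeq ι A)) (x : ↥X) {V : Set ↥X}
    (hV : IsOpen V) (hxV : x ∈ V) : ∃ b, coneX X x b ⊆ V := by
  obtain ⟨W, hW, rfl⟩ := isOpen_induced_iff.1 hV
  obtain ⟨b, hb⟩ := exists_cone_subset hW x.val hxV
  exact ⟨b, Set.preimage_mono hb⟩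

theorem coneX_eq_of_mem (X : Set (GSeq ι A)) {x z : ↥X} {b : ι} (hz : z ∈ coneX X x b) :
    coneX X z b = coneX X x b := by
  unfold coneX
  rw [cone_eq_of_mem hz]

theorem coneX_nested (X : Set (GSeq ι A)) {x x' w : ↥X} {b b' : ι} (hb : b ≤ b')
    (hw : w ∈ coneX X x b) (hw' : w ∈ coneX X x' b') : coneX X x' b' ⊆ coneX X x b :=
  Set.preimage_mono (cone_nested hb hw hw')

end GSeq

/-- The degree of `S`: the least cardinality of a subset of the positive cone `S⁺`
that is coinitial in `S⁺`. -/
def degree (S : Type*) [Zero S] [LinearOrder S] : Cardinal :=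
  ⨅ A : {A : Set S // (∀ a ∈ A, 0 < a) ∧ ∀ ε : S, 0 < ε → ∃ a ∈ A, a ≤ ε}, #↥(A.1)

/-- if `Deg(S) ≠ κ` and `(X, 𝔐, μ)` is a weak `λ⁺`-measure space on some
`X ⊆ ᵏλ` of weight at most `λ`, then every open `U` of positive measure contains a point that
is either non-measurable or of positive measure. -/
theorem statement_5 (κ lam : Cardinal) (hκ : κ.IsRegular) (hκlam : κ ≤ lam) (hlam : ℵ₀ ≤ lam)
    (X : Set (GSeq κ.ord.ToType lam.ord.ToType)) (hw : tweight ↥X ≤ lam)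
    (S : Type) [AddMonoid S] [LinearOrder S] (hS : IsPTOM S)
    (hdeg : degree S ≠ κ)
    (M : Set (Set ↥X)) (μ : Set ↥X → S)
    (hμ : IsWeakMeasureSpace ↥X lam S M μ)
    (U : Set ↥X) (hU : IsOpen U) (hUpos : 0 < μ U) :
    ∃ x ∈ U, ({x} : Set ↥X) ∉ M ∨ 0 < μ {x} := by
  by_contra hcon
  push_neg at hcon
  have hM : ∀ x ∈ U, ({x} : Set ↥X) ∈ M := fun x hx => (hcon x hx).1
  have hμ0 : ∀ x ∈ U, μ {x} = 0 := fun x hx => le_antisymm (hcon x hx).2 (hS.zero_le _)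
  have hκ0 : κ.ord ≠ 0 := by
    rw [Ne, Cardinal.ord_eq_zero]
    exact hκ.pos.ne'
  haveI hιne : Nonempty κ.ord.ToType := Ordinal.nonempty_toType_iff.2 hκ0
  have hconeX_mem : ∀ (x : ↥X) b, GSeq.coneX X x b ∈ M :=
    fun x b => hμ.open_mem _ (GSeq.isOpen_coneX X x b)
  -- Step 1: every point of U has a null cone inside U
  have step1 : ∀ x ∈ U, ∃ b, GSeq.coneX X x b ⊆ U ∧ μ (GSeq.coneX X x b) = 0 := by
    intro x hxU
    obtain ⟨b0, hb0⟩ := GSeq.exists_coneX_subset X x hU hxU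
    have hglb : IsGLB (Set.range fun b : κ.ord.ToType => μ (GSeq.coneX X x b)) 0 := by
      have h := hμ.point_reg x κ.ord (fun b => GSeq.coneX X x b) (hM x hxU)
        (by rw [Cardinal.card_ord]; exact hκlam)
        (fun b => ⟨GSeq.isOpen_coneX X x b, GSeq.mem_coneX_self X x b⟩)
        (fun V hV hxV => GSeq.exists_coneX_subset X x hV hxV)
      rwa [hμ0 x hxU] at h
    by_cases hz : ∃ b, μ (GSeq.coneX X x b) = 0
    · obtain ⟨b1, hb1⟩ := hz
      refine ⟨max b0 b1, (GSeq.coneX_anti X x (le_max_left _ _)).trans hb0,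
        le_antisymm ?_ (hS.zero_le _)⟩
      calc μ (GSeq.coneX X x (max b0 b1)) ≤ μ (GSeq.coneX X x b1) :=
            hμ.mono _ _ (hconeX_mem _ _) (hconeX_mem _ _) (GSeq.coneX_anti X x (le_max_right _ _))
        _ = 0 := hb1
    · push_neg at hz
      have hpos : ∀ b, 0 < μ (GSeq.coneX X x b) :=
        fun b => lt_of_le_of_ne (hS.zero_le _) (Ne.symm (hz b))
      exfalso
      have hA0pos : ∀ a ∈ Set.range (fun b : κ.ord.ToType => μ (GSeq.coneX X x b)), 0 < a := by
        rintro a ⟨b, rfl⟩; exact hpos b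
      have hA0co : ∀ ε : S, 0 < ε →
          ∃ a ∈ Set.range (fun b : κ.ord.ToType => μ (GSeq.coneX X x b)), a ≤ ε := by
        intro ε hε
        by_contra hno
        push_neg at hno
        have hlb : ε ∈ lowerBounds (Set.range fun b : κ.ord.ToType => μ (GSeq.coneX X x b)) :=
          fun a ha => (hno a ha).le
        exact absurd (hglb.2 hlb) (not_le.2 hε)
      have hdegle : degree S ≤ κ := by
        refine le_trans (ciInf_le' _
          (⟨_, hA0pos, hA0co⟩ : {A : Set S // (∀ a ∈ A, 0 < a) ∧
            ∀ ε : S, 0 < ε → ∃ a ∈ A, a ≤ ε})) ?_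
        calc #↥(Set.range fun b : κ.ord.ToType => μ (GSeq.coneX X x b))
            ≤ #κ.ord.ToType := Cardinal.mk_range_le
          _ = κ := Cardinal.mk_ord_toType κ
      have hdeglt : degree S < κ := lt_of_le_of_ne hdegle hdeg
      haveI : Nonempty {A : Set S // (∀ a ∈ A, 0 < a) ∧ ∀ ε : S, 0 < ε → ∃ a ∈ A, a ≤ ε} :=
        ⟨⟨_, hA0pos, hA0co⟩⟩
      obtain ⟨p, hp⟩ : ∃ p : {A : Set S // (∀ a ∈ A, 0 < a) ∧
          ∀ ε : S, 0 < ε → ∃ a ∈ A, a ≤ ε}, #↥(p.1) = degree S :=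
        csInf_mem (Set.range_nonempty _)
      obtain ⟨Ad, hAdpos, hAdco⟩ := p
      have hAdcard : #↥Ad < κ := by rw [hp]; exact hdeglt
      have hpick : ∀ a : ↥Ad, ∃ b, μ (GSeq.coneX X x b) < a.1 := by
        rintro ⟨a, ha⟩
        by_contra hno
        push_neg at hno
        have hlb : a ∈ lowerBounds (Set.range fun b : κ.ord.ToType => μ (GSeq.coneX X x b)) := by
          rintro s ⟨b, rfl⟩; exact hno b
        exact absurd (hglb.2 hlb) (not_le.2 (hAdpos a ha))
      choose f hf using hpick
      have hglt : ∀ a : ↥Ad, ((Ordinal.ToType.mk (o := κ.ord)).symm (f a)).1 < κ.ord :=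
        fun a => ((Ordinal.ToType.mk (o := κ.ord)).symm (f a)).2
      have hsup : (⨆ a : ↥Ad, ((Ordinal.ToType.mk (o := κ.ord)).symm (f a)).1) < κ.ord :=
        Cardinal.iSup_lt_ord_of_isRegular hκ hAdcard hglt
      set bstar := Ordinal.ToType.mk (o := κ.ord) ⟨_, hsup⟩ with hbstar
      have hble : ∀ a : ↥Ad, f a ≤ bstar := by
        intro a
        have h1 : ((Ordinal.ToType.mk (o := κ.ord)).symm (f a)) ≤ ⟨_, hsup⟩ :=
          Subtype.mk_le_mk.2 (Ordinal.le_iSup _ a) |>.trans_eq rfl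
        have h2 := (Ordinal.ToType.mk (o := κ.ord)).le_iff_le.2 h1
        rwa [OrderIso.apply_symm_apply] at h2
      obtain ⟨a, haAd, hale⟩ := hAdco _ (hpos bstar)
      have : μ (GSeq.coneX X x bstar) < a :=
        lt_of_le_of_lt (hμ.mono _ _ (hconeX_mem _ _) (hconeX_mem _ _)
          (GSeq.coneX_anti X x (hble ⟨a, haAd⟩))) (hf ⟨a, haAd⟩)
      exact absurd hale (not_le.2 this)
  -- Step 2: choose the cones
  choose! bfun hbprop using step1
  set T : ↥X → Set κ.ord.ToType :=
    fun z => {b | ∃ x, x ∈ U ∧ z ∈ GSeq.coneX X x (bfun x) ∧ b = bfun x} with hT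
  have hβex : ∀ z ∈ U, ∃ b ∈ T z, ∀ b' ∈ T z, b ≤ b' := by
    intro z hz
    have hTne : (T z).Nonempty := ⟨bfun z, z, hz, GSeq.mem_coneX_self X z (bfun z), rfl⟩
    exact ⟨(wellFounded_lt (α := κ.ord.ToType)).min (T z) hTne,
      WellFounded.min_mem _ _ _,
      fun b' hb' => not_lt.1 (WellFounded.not_lt_min _ _ hb')⟩
  choose! βf hβprop using hβex
  have hβmem : ∀ z ∈ U, βf z ∈ T z := fun z hz => (hβprop z hz).1
  have hβmin : ∀ z ∈ U, ∀ b' ∈ T z, βf z ≤ b' := fun z hz => (hβprop z hz).2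
  set D : ↥X → Set ↥X := fun z => GSeq.coneX X z (βf z) with hD
  have hD_eq : ∀ z ∈ U, ∃ x, x ∈ U ∧ D z = GSeq.coneX X x (bfun x) := by
    intro z hz
    obtain ⟨x, hxU, hzx, heq⟩ := hβmem z hz
    refine ⟨x, hxU, ?_⟩
    show GSeq.coneX X z (βf z) = GSeq.coneX X x (bfun x)
    rw [heq]
    exact GSeq.coneX_eq_of_mem X hzx
  have hDU : ∀ z ∈ U, D z ⊆ U := by
    intro z hz
    obtain ⟨x, hxU, heq⟩ := hD_eq z hz
    rw [heq]
    exact (hbprop x hxU).1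
  have hD0 : ∀ z ∈ U, μ (D z) = 0 := by
    intro z hz
    obtain ⟨x, hxU, heq⟩ := hD_eq z hz
    rw [heq]
    exact (hbprop x hxU).2
  have hzD : ∀ z ∈ U, z ∈ D z := fun z _ => GSeq.mem_coneX_self X z (βf z)
  have hDopen : ∀ z, IsOpen (D z) := fun z => GSeq.isOpen_coneX X z (βf z)
  -- disjointness
  have hkey : ∀ z ∈ U, ∀ z' ∈ U, βf z ≤ βf z' → ∀ w, w ∈ D z → w ∈ D z' → D z = D z' := by
    intro z hz z' hz' hle w hw hw'
    have hsub : D z' ⊆ D z := GSeq.coneX_nested X hle hw hw'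
    obtain ⟨x, hxU, hzx, heq⟩ := hβmem z hz
    have hz'Dz : z' ∈ D z := hsub (hzD z' hz')
    have hz'x : z' ∈ GSeq.coneX X x (bfun x) := by
      have hDzeq : D z = GSeq.coneX X x (bfun x) := by
        show GSeq.coneX X z (βf z) = _
        rw [heq]
        exact GSeq.coneX_eq_of_mem X hzx
      rwa [hDzeq] at hz'Dz
    have hββ : βf z' = βf z := by
      refine le_antisymm ?_ hle
      have : bfun x ∈ T z' := ⟨x, hxU, hz'x, rfl⟩
      have h2 := hβmin z' hz' _ this
      rwa [← heq] at h2
    have e1 : D z = GSeq.coneX X w (βf z) := (GSeq.coneX_eq_of_mem X hw).symm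
    have e2 : D z' = GSeq.coneX X w (βf z') := (GSeq.coneX_eq_of_mem X hw').symm
    rw [e1, e2, hββ]
  have hdisj : ∀ z ∈ U, ∀ z' ∈ U, D z ≠ D z' → Disjoint (D z) (D z') := by
    intro z hz z' hz' hne
    by_contra hnd
    obtain ⟨w, hw, hw'⟩ := Set.not_disjoint_iff.1 hnd
    rcases le_total (βf z) (βf z') with h1 | h1
    · exact hne (hkey z hz z' hz' h1 w hw hw')
    · exact hne ((hkey z' hz' z hz h1 w hw' hw).symm)
  set 𝒟 : Set (Set ↥X) := {Ds | ∃ z, z ∈ U ∧ Ds = D z} with h𝒟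
  have h𝒟disj : ∀ D1 ∈ 𝒟, ∀ D2 ∈ 𝒟, D1 ≠ D2 → Disjoint D1 D2 := by
    rintro D1 ⟨z, hz, rfl⟩ D2 ⟨z', hz', rfl⟩ hne
    exact hdisj z hz z' hz' hne
  have h𝒟0 : ∀ Ds ∈ 𝒟, μ Ds = 0 := by
    rintro Ds ⟨z, hz, rfl⟩
    exact hD0 z hz
  have h𝒟open : ∀ Ds ∈ 𝒟, IsOpen Ds := by
    rintro Ds ⟨z, hz, rfl⟩
    exact hDopen z
  -- cardinality of 𝒟
  haveI : Nonempty {B : Set (Set ↥X) // TopologicalSpace.IsTopologicalBasis B} :=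
    ⟨⟨_, TopologicalSpace.isTopologicalBasis_opens⟩⟩
  obtain ⟨⟨B, hB⟩, hBcard⟩ : ∃ B : {B : Set (Set ↥X) // TopologicalSpace.IsTopologicalBasis B},
      #↥(B.1) = tweight ↥X := csInf_mem (Set.range_nonempty _)
  have hBlam : #↥B ≤ lam := le_of_eq_of_le hBcard hw
  have hchoice : ∀ Ds : ↥𝒟, ∃ v : Set ↥X, v ∈ B ∧ v.Nonempty ∧ v ⊆ Ds.1 := by
    rintro ⟨Ds, z, hz, rfl⟩
    obtain ⟨v, hvB, hzv, hvsub⟩ := hB.exists_subset_of_mem_open (hzD z hz) (hDopen z)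
    exact ⟨v, hvB, ⟨z, hzv⟩, hvsub⟩
  choose φ hφB hφne hφsub using hchoice
  have hφinj : Function.Injective (fun Ds : ↥𝒟 => (⟨φ Ds, hφB Ds⟩ : ↥B)) := by
    intro D1 D2 hEq
    have hEq' : φ D1 = φ D2 := congrArg Subtype.val hEq
    obtain ⟨w, hwv⟩ := hφne D1
    have hw1 : w ∈ D1.1 := hφsub D1 hwv
    have hw2 : w ∈ D2.1 := hφsub D2 (hEq' ▸ hwv)
    by_contra hne
    have hne' : D1.1 ≠ D2.1 := fun h => hne (Subtype.ext h)
    exact Set.not_disjoint_iff.2 ⟨w, hw1, hw2⟩ (h𝒟disj _ D1.2 _ D2.2 hne')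
  have hcard𝒟 : #↥𝒟 ≤ lam := (Cardinal.mk_le_of_injective hφinj).trans hBlam
  have hUnion : ⋃₀ 𝒟 = U := by
    apply subset_antisymm
    · exact sUnion_subset (by rintro Ds ⟨z, hz, rfl⟩; exact hDU z hz)
    · exact fun z hz => ⟨D z, ⟨z, hz, rfl⟩, hzD z hz⟩
  -- additivity gives μ U = 0
  have hγcard : (#↥𝒟).ord.card ≤ lam := by rw [Cardinal.card_ord]; exact hcard𝒟
  have e : (#↥𝒟).ord.ToType ≃ ↥𝒟 :=
    Classical.choice (Cardinal.eq.1 (Cardinal.mk_ord_toType #↥𝒟))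
  have hAmem : ∀ i, ((e i).1 : Set ↥X) ∈ M := fun i => hμ.open_mem _ (h𝒟open _ (e i).2)
  have hApair : Pairwise (Function.onFun Disjoint (fun i => ((e i).1 : Set ↥X))) := by
    intro i j hij
    have hne : (e i).1 ≠ (e j).1 := fun h => hij (e.injective (Subtype.ext h))
    exact h𝒟disj _ (e i).2 _ (e j).2 hne
  have hlub := hμ.additive (#↥𝒟).ord (fun i => ((e i).1 : Set ↥X)) hγcard hAmem hApair
  have hAUn : (⋃ i, ((e i).1 : Set ↥X)) = U := by
    rw [← hUnion]
    ext y
    simp only [mem_iUnion, mem_sUnion]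
    constructor
    · rintro ⟨i, hi⟩
      exact ⟨(e i).1, (e i).2, hi⟩
    · rintro ⟨Ds, hDs, hy⟩
      refine ⟨e.symm ⟨Ds, hDs⟩, ?_⟩
      rw [Equiv.apply_symm_apply]
      exact hy
  rw [hAUn] at hlub
  have hub : (0 : S) ∈ upperBounds
      {s : S | ∃ F : Finset (#↥𝒟).ord.ToType,
        s = finSum (fun i => μ ((e i).1 : Set ↥X)) F} := by
    rintro s ⟨F, rfl⟩
    refine le_of_eq (List.sum_eq_zero ?_)
    intro t ht
    obtain ⟨i, _, rfl⟩ := List.mem_map.1 ht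
    exact h𝒟0 _ (e i).2
  exact absurd (hlub.2 hub) (not_le.2 hUpos)


end
end

section
/- Let κ and λ be infinite cardinals with κ regular and κ ≤ λ, let X ⊆ ᵏλ be a subspace of weight at most λ, and let S be a positively totally ordered monoid that is not 0-continuous. Let (X, 𝔐, μ) be a weak λ⁺-measure space with μ taking values in S, and let U ⊆ X be an open set with μ(U) > 0. Then there is x ∈ U such that either {x} ∉ 𝔐 or μ({x}) > 0. -/
open Cardinal Set

noncomputable section

/-- `S` is `0`-continuous: its degree is infinite and `S⁺` contains a coinitial,
strongly decreasing sequence. -/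
def ZeroContinuous (S : Type) [AddMonoid S] [LinearOrder S] : Prop :=
  ℵ₀ ≤ degree S ∧ ∃ (δ : Ordinal.{0}) (a : δ.ToType → S),
    (∀ i, 0 < a i) ∧ (∀ ε : S, 0 < ε → ∃ i, a i ≤ ε) ∧
    ∀ i j : δ.ToType, j < i → a i + a i < a j

section lists
variable {S : Type} [AddMonoid S] [LinearOrder S] (hS : IsPTOM S) {ι : Type} [LinearOrder ι]
include hS
set_option linter.unusedSectionVars false

lemma ptom_add_pos {t u : S} (ht : 0 < t) (hu : 0 < u) : 0 < t + u :=
  lt_of_lt_of_le ht (by simpa using hS.add_le_add t t 0 u le_rfl (hS.zero_le u))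

lemma list_map_sum_zero (f : ι → S) : ∀ L : List ι, (∀ i ∈ L, f i = 0) → (L.map f).sum = 0 := by
  intro L
  induction L with
  | nil => simp
  | cons k L ih =>
    intro h
    simp only [List.map_cons, List.sum_cons, h k (by simp), zero_add]
    exact ih fun i hi => h i (by simp [hi])

lemma list_single_le (f : ι → S) : ∀ (L : List ι) (i : ι), i ∈ L → f i ≤ (L.map f).sum := by
  intro L
  induction L with
  | nil => simp
  | cons k L ih =>
    intro i hi
    simp only [List.map_cons, List.sum_cons]
    rcases List.mem_cons.mp hi with h | h
    · subst h
      calc f i = f i + 0 := (add_zero _).symm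
      _ ≤ f i + (L.map f).sum := hS.add_le_add _ _ _ _ le_rfl (hS.zero_le _)
    · calc f i ≤ (L.map f).sum := ih i h
      _ = 0 + (L.map f).sum := (zero_add _).symm
      _ ≤ f k + (L.map f).sum := hS.add_le_add _ _ _ _ (hS.zero_le _) le_rfl

lemma list_pair_le (f : ι → S) :
    ∀ (L : List ι) (i j : ι), i ∈ L → j ∈ L → i ≠ j →
      min (f i) (f j) + min (f i) (f j) ≤ (L.map f).sum := by
  intro L
  induction L with
  | nil => simp
  | cons k L ih =>
    intro i j hi hj hij
    simp only [List.map_cons, List.sum_cons]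
    rcases List.mem_cons.mp hi with h | h
    · subst h
      have hjL : j ∈ L := (List.mem_cons.mp hj).resolve_left fun h => hij h.symm
      exact hS.add_le_add _ _ _ _ (min_le_left _ _)
        (le_trans (min_le_right _ _) (list_single_le hS f L j hjL))
    · rcases List.mem_cons.mp hj with h' | h'
      · subst h'
        exact hS.add_le_add _ _ _ _ (min_le_right _ _)
          (le_trans (min_le_left _ _) (list_single_le hS f L i h))
      · calc min (f i) (f j) + min (f i) (f j) ≤ (L.map f).sum := ih i j h h' hij
        _ = 0 + (L.map f).sum := (zero_add _).symm
        _ ≤ f k + (L.map f).sum := hS.add_le_add _ _ _ _ (hS.zero_le _) le_rfl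

lemma list_le_of_almost_zero (f : ι → S) (i0 : ι) :
    ∀ L : List ι, L.Nodup → (∀ i ∈ L, f i = 0 ∨ i = i0) → (L.map f).sum ≤ f i0 := by
  intro L
  induction L with
  | nil => simpa using hS.zero_le (f i0)
  | cons k L ih =>
    intro hnd h
    simp only [List.map_cons, List.sum_cons]
    rcases h k (by simp) with h0 | hk
    · rw [h0, zero_add]
      exact ih (List.Nodup.of_cons hnd) fun i hi => h i (by simp [hi])
    · subst hk
      have : (L.map f).sum = 0 := by
        apply list_map_sum_zero hS f
        intro i hi
        rcases h i (by simp [hi]) with h0 | h1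
        · exact h0
        · exact absurd (h1 ▸ hi) (List.nodup_cons.mp hnd).1
      rw [this, add_zero]

lemma finSum_zero (f : ι → S) (F : Finset ι) (h : ∀ i ∈ F, f i = 0) : finSum f F = 0 :=
  list_map_sum_zero hS f _ fun i hi => h i ((Finset.mem_sort _).mp hi)

lemma finSum_pair_le (f : ι → S) (F : Finset ι) (i j : ι) (hi : i ∈ F) (hj : j ∈ F)
    (hij : i ≠ j) : min (f i) (f j) + min (f i) (f j) ≤ finSum f F :=
  list_pair_le hS f _ i j ((Finset.mem_sort _).mpr hi) ((Finset.mem_sort _).mpr hj) hij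

lemma finSum_le_of_almost_zero (f : ι → S) (i0 : ι) (F : Finset ι)
    (h : ∀ i ∈ F, f i = 0 ∨ i = i0) : finSum f F ≤ f i0 :=
  list_le_of_almost_zero hS f i0 _ (Finset.sort_nodup _ _)
    fun i hi => h i ((Finset.mem_sort _).mp hi)

end lists
section cones
open TopologicalSpace
variable {ι A : Type} [LinearOrder ι]

def cone (x : GSeq ι A) (b : ι) : Set (GSeq ι A) := {y : GSeq ι A | ∀ i, i < b → y i = x i}

lemma isOpen_cone (x : GSeq ι A) (b : ι) : IsOpen (cone x b) :=
  TopologicalSpace.isOpen_generateFrom_of_mem ⟨x, b, rfl⟩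

lemma mem_cone_self (x : GSeq ι A) (b : ι) : x ∈ cone x b := fun _ _ => rfl

lemma cone_mono (x : GSeq ι A) {b b' : ι} (h : b ≤ b') : cone x b' ⊆ cone x b :=
  fun _ hy i hi => hy i (lt_of_lt_of_le hi h)

lemma cone_eq_of_mem {x y : GSeq ι A} {b : ι} (h : y ∈ cone x b) : cone y b = cone x b := by
  ext z
  exact ⟨fun hz i hi => (hz i hi).trans (h i hi), fun hz i hi => (hz i hi).trans (h i hi).symm⟩

lemma cone_nbhd [Nonempty ι] {x : GSeq ι A} {V : Set (GSeq ι A)} (hV : IsOpen V) (hx : x ∈ V) :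
    ∃ b, cone x b ⊆ V := by
  induction hV with
  | basic s hs =>
    obtain ⟨x', b, rfl⟩ := hs
    exact ⟨b, fun y hy i hi => (hy i hi).trans (hx i hi)⟩
  | univ => exact ⟨Classical.arbitrary ι, fun _ _ => trivial⟩
  | inter s t _ _ ihs iht =>
    obtain ⟨b1, hb1⟩ := ihs hx.1
    obtain ⟨b2, hb2⟩ := iht hx.2
    exact ⟨max b1 b2, fun y hy =>
      ⟨hb1 (cone_mono x (le_max_left b1 b2) hy), hb2 (cone_mono x (le_max_right b1 b2) hy)⟩⟩
  | sUnion T hT ih =>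
    obtain ⟨s, hsT, hxs⟩ := hx
    obtain ⟨b, hb⟩ := ih s hsT hxs
    exact ⟨b, fun y hy => ⟨s, hsT, hb hy⟩⟩

variable {X : Set (GSeq ι A)}

def coneX (X : Set (GSeq ι A)) (x : ↥X) (b : ι) : Set ↥X := Subtype.val ⁻¹' cone (x : GSeq ι A) b

lemma isOpen_coneX (x : ↥X) (b : ι) : IsOpen (coneX X x b) :=
  (isOpen_cone _ b).preimage continuous_subtype_val

lemma mem_coneX_self (x : ↥X) (b : ι) : x ∈ coneX X x b := mem_cone_self _ b

lemma coneX_mono (x : ↥X) {b b' : ι} (h : b ≤ b') : coneX X x b' ⊆ coneX X x b :=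
  fun _ hy => cone_mono _ h hy

lemma coneX_eq_of_mem {x y : ↥X} {b : ι} (h : y ∈ coneX X x b) : coneX X y b = coneX X x b := by
  unfold coneX
  rw [cone_eq_of_mem h]

lemma coneX_nbhd [Nonempty ι] {x : ↥X} {V : Set ↥X} (hV : IsOpen V) (hx : x ∈ V) :
    ∃ b, coneX X x b ⊆ V := by
  obtain ⟨W, hW, rfl⟩ := isOpen_induced_iff.mp hV
  obtain ⟨b, hb⟩ := cone_nbhd hW hx
  exact ⟨b, fun y hy => hb hy⟩

end cones

section cellularity
open TopologicalSpace

lemma exists_small_basis {Y : Type} [TopologicalSpace Y] {lam : Cardinal}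
    (hw : tweight Y ≤ lam) :
    ∃ B : Set (Set Y), IsTopologicalBasis B ∧ #↥B ≤ lam := by
  by_contra h
  push_neg at h
  have : Order.succ lam ≤ tweight Y := by
    haveI : Nonempty {B : Set (Set Y) // IsTopologicalBasis B} :=
      ⟨⟨{U | IsOpen U}, isTopologicalBasis_opens⟩⟩
    exact le_ciInf fun B => Order.succ_le_of_lt (h B.1 B.2)
  exact absurd (lt_of_lt_of_le (Order.lt_succ lam) (this.trans hw)) (lt_irrefl _)

lemma cellularity {Y : Type} [TopologicalSpace Y] {lam : Cardinal} (hw : tweight Y ≤ lam)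
    (𝒟 : Set (Set Y)) (hopen : ∀ D ∈ 𝒟, IsOpen D) (hne : ∀ D ∈ 𝒟, D.Nonempty)
    (hdisj : 𝒟.Pairwise Disjoint) : #↥𝒟 ≤ lam := by
  obtain ⟨B, hB, hBcard⟩ := exists_small_basis hw
  have key : ∀ D : ↥𝒟, ∃ v : ↥B, (v : Set Y).Nonempty ∧ (v : Set Y) ⊆ D := by
    rintro ⟨D, hD⟩
    obtain ⟨x, hx⟩ := hne D hD
    obtain ⟨v, hvB, hxv, hvD⟩ := hB.exists_subset_of_mem_open hx (hopen D hD)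
    exact ⟨⟨v, hvB⟩, ⟨x, hxv⟩, hvD⟩
  choose f hfne hfsub using key
  have hinj : Function.Injective f := by
    intro D1 D2 h
    obtain ⟨x, hx⟩ := hfne D1
    by_contra hne'
    have hne'' : (D1 : Set Y) ≠ (D2 : Set Y) := fun hc => hne' (Subtype.ext hc)
    have := hdisj D1.2 D2.2 hne''
    exact (Set.disjoint_left.mp this (hfsub D1 hx) (hfsub D2 (h ▸ hx)))
  exact le_trans (Cardinal.mk_le_of_injective hinj) hBcard

lemma enum_set {Y : Type} (𝒟 : Set (Set Y)) {lam : Cardinal} (h : #↥𝒟 ≤ lam) :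
    ∃ (γ : Ordinal.{0}) (e : γ.ToType → ↥𝒟), Function.Bijective e ∧ γ.card ≤ lam := by
  refine ⟨(#↥𝒟).ord, ?_⟩
  have hcard : #(#↥𝒟).ord.ToType = #↥𝒟 := by rw [Cardinal.mk_toType, Cardinal.card_ord]
  obtain ⟨e⟩ := Cardinal.eq.mp hcard
  exact ⟨e, e.bijective, by rwa [Cardinal.card_ord]⟩

end cellularity
section mainproof

variable {κ lam : Cardinal} {X : Set (GSeq κ.ord.ToType lam.ord.ToType)}
variable {S : Type} [AddMonoid S] [LinearOrder S]
variable {M : Set (Set ↥X)} {μ : Set ↥X → S}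

/-- Partition lemma: a pairwise disjoint family of nonempty open sets can be enumerated and
its union's measure is the LUB of finite sums. -/
lemma partition_lub (hw : tweight ↥X ≤ lam) (hμ : IsWeakMeasureSpace ↥X lam S M μ)
    (𝒟 : Set (Set ↥X)) (hopen : ∀ D ∈ 𝒟, IsOpen D) (hne : ∀ D ∈ 𝒟, D.Nonempty)
    (hdisj : 𝒟.Pairwise Disjoint) :
    ∃ (γ : Ordinal.{0}) (e : γ.ToType → ↥𝒟), Function.Bijective e ∧
      (⋃ i, ((e i : ↥𝒟) : Set ↥X)) = ⋃₀ 𝒟 ∧ ⋃₀ 𝒟 ∈ M ∧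
      IsLUB {s : S | ∃ F : Finset γ.ToType, s = finSum (fun i => μ ((e i : ↥𝒟) : Set ↥X)) F}
        (μ (⋃₀ 𝒟)) := by
  have hcard : #↥𝒟 ≤ lam := cellularity hw 𝒟 hopen hne hdisj
  obtain ⟨γ, e, hbij, hγ⟩ := enum_set 𝒟 hcard
  have hUnion : (⋃ i, ((e i : ↥𝒟) : Set ↥X)) = ⋃₀ 𝒟 := by
    ext z
    simp only [Set.mem_iUnion, Set.mem_sUnion]
    constructor
    · rintro ⟨i, hi⟩
      exact ⟨(e i : ↥𝒟), (e i).2, hi⟩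
    · rintro ⟨D, hD, hz⟩
      obtain ⟨i, hi⟩ := hbij.2 ⟨D, hD⟩
      exact ⟨i, by rw [hi]; exact hz⟩
  have hmem : ⋃₀ 𝒟 ∈ M := hμ.sUnion_mem 𝒟 (fun D hD => hμ.open_mem D (hopen D hD)) hcard
  have hpd : Pairwise (Function.onFun Disjoint (fun i => ((e i : ↥𝒟) : Set ↥X))) := by
    intro i j hij
    have h1 : e i ≠ e j := fun hc => hij (hbij.1 hc)
    have h2 : ((e i : ↥𝒟) : Set ↥X) ≠ ((e j : ↥𝒟) : Set ↥X) := fun hc => h1 (Subtype.ext hc)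
    exact hdisj (e i).2 (e j).2 h2
  have hlub := hμ.additive γ (fun i => ((e i : ↥𝒟) : Set ↥X)) hγ
    (fun i => hμ.open_mem _ (hopen _ (e i).2)) hpd
  rw [hUnion] at hlub
  exact ⟨γ, e, hbij, hUnion, hmem, hlub⟩

/-- If every point of `U` has a cone neighbourhood of measure zero, then `μ U = 0`;
contradiction with `0 < μ U`. -/
lemma cover_zero (hS : IsPTOM S) (hw : tweight ↥X ≤ lam)
    (hμ : IsWeakMeasureSpace ↥X lam S M μ) [Nonempty κ.ord.ToType]
    (U : Set ↥X) (hU : IsOpen U) (hUpos : 0 < μ U)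
    (h0 : ∀ x ∈ U, ∃ b, μ (coneX X x b) = 0) : False := by
  classical
  have wf : WellFounded ((· < ·) : κ.ord.ToType → κ.ord.ToType → Prop) := IsWellFounded.wf
  set bx : ↥X → κ.ord.ToType := fun x =>
    if h : ∃ b, μ (coneX X x b) = 0 then wf.min {b | μ (coneX X x b) = 0} ⟨h.choose, h.choose_spec⟩
    else Classical.arbitrary _ with hbx
  have hbx0 : ∀ x ∈ U, μ (coneX X x (bx x)) = 0 := by
    intro x hx
    obtain h := h0 x hx
    simp only [hbx, dif_pos h]
    exact wf.min_mem {b | μ (coneX X x b) = 0} ⟨h.choose, h.choose_spec⟩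
  have hbxmin : ∀ x ∈ U, ∀ b, μ (coneX X x b) = 0 → ¬ b < bx x := by
    intro x hx b hb
    obtain h := h0 x hx
    simp only [hbx, dif_pos h]
    exact wf.not_lt_min {b | μ (coneX X x b) = 0} hb
  set 𝒟 : Set (Set ↥X) := {D | ∃ x ∈ U, D = coneX X x (bx x)} with h𝒟
  have hopen : ∀ D ∈ 𝒟, IsOpen D := by rintro D ⟨x, hx, rfl⟩; exact isOpen_coneX x _
  have hne : ∀ D ∈ 𝒟, D.Nonempty := by rintro D ⟨x, hx, rfl⟩; exact ⟨x, mem_coneX_self x _⟩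
  have hdisj : 𝒟.Pairwise Disjoint := by
    rintro D1 ⟨x, hx, rfl⟩ D2 ⟨y, hy, rfl⟩ hD
    by_contra hnd
    obtain ⟨z, hz1, hz2⟩ := Set.not_disjoint_iff.mp hnd
    -- wlog bx x ≤ bx y
    have key : ∀ u v : ↥X, u ∈ U → v ∈ U → bx u ≤ bx v →
        ∀ w : ↥X, w ∈ coneX X u (bx u) → w ∈ coneX X v (bx v) →
        coneX X u (bx u) = coneX X v (bx v) := by
      intro u v hu hv hle w hw1 hw2
      have hw2' : w ∈ coneX X v (bx u) := coneX_mono v hle hw2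
      have e1 : coneX X w (bx u) = coneX X u (bx u) := coneX_eq_of_mem hw1
      have e2 : coneX X w (bx u) = coneX X v (bx u) := coneX_eq_of_mem hw2'
      have hv0 : μ (coneX X v (bx u)) = 0 := by
        rw [← e2, e1]; exact hbx0 u hu
      have : ¬ bx u < bx v := hbxmin v hv _ hv0
      have heq : bx u = bx v := le_antisymm hle (not_lt.mp this)
      rw [← heq] at hw2 ⊢
      exact e1.symm.trans e2
    rcases le_total (bx x) (bx y) with hle | hle
    · exact hD (key x y hx hy hle z hz1 hz2)
    · exact hD ((key y x hy hx hle z hz2 hz1).symm)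
  obtain ⟨γ, e, hbij, hUnion, hmem, hlub⟩ := partition_lub hw hμ 𝒟 hopen hne hdisj
  have hzero : ∀ i, μ ((e i : ↥𝒟) : Set ↥X) = 0 := by
    intro i
    obtain ⟨x, hx, hD⟩ := (e i).2
    rw [hD]; exact hbx0 x hx
  have hub : (0 : S) ∈ upperBounds
      {s : S | ∃ F : Finset γ.ToType, s = finSum (fun i => μ ((e i : ↥𝒟) : Set ↥X)) F} := by
    rintro s ⟨F, rfl⟩
    exact le_of_eq (finSum_zero hS _ F fun i _ => hzero i)
  have hμU0 : μ (⋃₀ 𝒟) ≤ 0 := hlub.2 hub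
  have hsub : U ⊆ ⋃₀ 𝒟 := fun x hx => ⟨coneX X x (bx x), ⟨x, hx, rfl⟩, mem_coneX_self x _⟩
  have : μ U ≤ 0 := le_trans (hμ.mono U (⋃₀ 𝒟) (hμ.open_mem U hU) hmem hsub) hμU0
  exact absurd hUpos (not_lt.mpr this)

end mainproof
section mainproof2

variable {κ lam : Cardinal} {X : Set (GSeq κ.ord.ToType lam.ord.ToType)}
variable {S : Type} [AddMonoid S] [LinearOrder S]
variable {M : Set (Set ↥X)} {μ : Set ↥X → S}

lemma main_contra (hκ : κ.IsRegular) (hκlam : κ ≤ lam)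
    (hw : tweight ↥X ≤ lam) (hS : IsPTOM S)
    (hμ : IsWeakMeasureSpace ↥X lam S M μ)
    (U : Set ↥X) (hU : IsOpen U) (hUpos : 0 < μ U)
    (hH : ∀ x ∈ U, {x} ∈ M ∧ μ {x} = 0) : ZeroContinuous S := by
  classical
  haveI hKne : Nonempty κ.ord.ToType := by
    rw [Ordinal.toType_nonempty_iff_ne_zero]
    intro h
    have : κ = 0 := by rw [← Cardinal.card_ord κ, h, Ordinal.card_zero]
    exact absurd (this ▸ hκ.aleph0_le) (by simp [Cardinal.aleph0_ne_zero])
  -- GLB of cone measures at points of U is 0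
  have hGLB : ∀ x ∈ U, IsGLB (Set.range fun b : κ.ord.ToType => μ (coneX X x b)) 0 := by
    intro x hx
    have := hμ.point_reg x κ.ord (fun b => coneX X x b) (hH x hx).1
      (by rw [Cardinal.card_ord]; exact hκlam)
      (fun b => ⟨isOpen_coneX x b, mem_coneX_self x b⟩)
      (fun V hV hxV => coneX_nbhd hV hxV)
    rwa [(hH x hx).2] at this
  -- degree is infinite
  have hdeg : ℵ₀ ≤ degree S := by
    by_contra hd
    have hfin : ∃ A : Set S, (∀ a ∈ A, 0 < a) ∧ (∀ ε : S, 0 < ε → ∃ a ∈ A, a ≤ ε) ∧ #↥A < ℵ₀ := by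
      by_contra hA
      push_neg at hA
      apply hd
      haveI : Nonempty {A : Set S // (∀ a ∈ A, 0 < a) ∧ ∀ ε : S, 0 < ε → ∃ a ∈ A, a ≤ ε} :=
        ⟨⟨{a | 0 < a}, fun a ha => ha, fun ε hε => ⟨ε, hε, le_rfl⟩⟩⟩
      exact le_ciInf fun A => hA A.1 A.2.1 A.2.2
    obtain ⟨A, hApos, hAco, hAfin⟩ := hfin
    obtain ⟨ε0, hε0⟩ := hS.exists_pos
    have hAne : A.Nonempty := by obtain ⟨a, ha, _⟩ := hAco ε0 hε0; exact ⟨a, ha⟩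
    obtain ⟨m, hmA, hmmin⟩ := Set.exists_min_image A id (Cardinal.lt_aleph0_iff_set_finite.mp hAfin) hAne
    have hmpos : 0 < m := hApos m hmA
    have hmle : ∀ ε : S, 0 < ε → m ≤ ε := by
      intro ε hε
      obtain ⟨a, haA, haε⟩ := hAco ε hε
      exact le_trans (hmmin a haA) haε
    refine cover_zero hS hw hμ U hU hUpos ?_
    intro x hx
    have hglb := hGLB x hx
    have : ¬ m ∈ lowerBounds (Set.range fun b : κ.ord.ToType => μ (coneX X x b)) := by
      intro hlb
      exact absurd (hglb.2 hlb) (not_le.mpr hmpos)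
    simp only [lowerBounds, Set.mem_setOf_eq, Set.mem_range] at this
    push_neg at this
    obtain ⟨v, ⟨b, rfl⟩, hvm⟩ := this
    refine ⟨b, ?_⟩
    by_contra hvne
    have hvpos : 0 < μ (coneX X x b) := lt_of_le_of_ne (hS.zero_le _) (Ne.symm hvne)
    exact absurd (hmle _ hvpos) (not_le.mpr hvm)
  -- a point all of whose cones have positive measure
  obtain ⟨xs, hxsU, hxs⟩ : ∃ x ∈ U, ∀ b, 0 < μ (coneX X x b) := by
    by_contra h
    push_neg at h
    refine cover_zero hS hw hμ U hU hUpos ?_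
    intro x hx
    obtain ⟨b, hb⟩ := h x hx
    exact ⟨b, le_antisymm hb (hS.zero_le _)⟩
  -- coinitiality of cone measures at xs
  have hcoin : ∀ ε : S, 0 < ε → ∃ b, μ (coneX X xs b) < ε := by
    intro ε hε
    have hglb := hGLB xs hxsU
    have : ¬ ε ∈ lowerBounds (Set.range fun b : κ.ord.ToType => μ (coneX X xs b)) := by
      intro hlb
      exact absurd (hglb.2 hlb) (not_le.mpr hε)
    simp only [lowerBounds, Set.mem_setOf_eq, Set.mem_range] at this
    push_neg at this
    obtain ⟨v, ⟨b, rfl⟩, hvm⟩ := this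
    exact ⟨b, hvm⟩
  -- the halving property
  have hstar : ∀ ε : S, 0 < ε → ∃ t : S, 0 < t ∧ t + t < ε := by
    intro ε hε
    by_contra hh
    push_neg at hh
    obtain ⟨b0, hb0⟩ := hcoin ε hε
    -- show that for b0 ≤ b', the measure does not decrease
    have hconst : ∀ b', b0 ≤ b' → μ (coneX X xs b0) ≤ μ (coneX X xs b') := by
      intro b' hbb
      set 𝒟 : Set (Set ↥X) := {D | ∃ z ∈ coneX X xs b0, D = coneX X z b'} with h𝒟
      have hopen : ∀ D ∈ 𝒟, IsOpen D := by rintro D ⟨z, hz, rfl⟩; exact isOpen_coneX z _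
      have hne : ∀ D ∈ 𝒟, D.Nonempty := by rintro D ⟨z, hz, rfl⟩; exact ⟨z, mem_coneX_self z _⟩
      have hdisj : 𝒟.Pairwise Disjoint := by
        rintro D1 ⟨z1, hz1, rfl⟩ D2 ⟨z2, hz2, rfl⟩ hD
        by_contra hnd
        obtain ⟨w, hw1, hw2⟩ := Set.not_disjoint_iff.mp hnd
        exact hD ((coneX_eq_of_mem hw1).symm.trans (coneX_eq_of_mem hw2))
      obtain ⟨γ, e, hbij, hUnion, hmem, hlub⟩ := partition_lub hw hμ 𝒟 hopen hne hdisj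
      have hU𝒟 : ⋃₀ 𝒟 = coneX X xs b0 := by
        ext w
        simp only [Set.mem_sUnion]
        constructor
        · rintro ⟨D, ⟨z, hz, rfl⟩, hw⟩
          have : w ∈ coneX X z b0 := coneX_mono z hbb hw
          rw [coneX_eq_of_mem hz] at this
          exact this
        · intro hw
          exact ⟨coneX X w b', ⟨w, hw, rfl⟩, mem_coneX_self w _⟩
      rw [hU𝒟] at hlub hmem
      -- the distinguished piece
      have hpiece : coneX X xs b' ∈ 𝒟 := ⟨xs, mem_coneX_self xs b0, rfl⟩
      obtain ⟨i0, hi0⟩ := hbij.2 ⟨coneX X xs b', hpiece⟩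
      have hi0val : ((e i0 : ↥𝒟) : Set ↥X) = coneX X xs b' := by rw [hi0]
      -- all other pieces have measure zero
      have hz : ∀ i : γ.ToType, μ ((e i : ↥𝒟) : Set ↥X) = 0 ∨ i = i0 := by
        intro i
        by_contra hcc
        push_neg at hcc
        obtain ⟨hne0, hii0⟩ := hcc
        have hipos : 0 < μ ((e i : ↥𝒟) : Set ↥X) := lt_of_le_of_ne (hS.zero_le _) (Ne.symm hne0)
        have hi0pos : 0 < μ ((e i0 : ↥𝒟) : Set ↥X) := by rw [hi0val]; exact hxs b'
        set f : γ.ToType → S := fun i => μ ((e i : ↥𝒟) : Set ↥X) with hf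
        have hminpos : 0 < min (f i) (f i0) := lt_min hipos hi0pos
        have h1 : ε ≤ min (f i) (f i0) + min (f i) (f i0) := hh _ hminpos
        have h2 : min (f i) (f i0) + min (f i) (f i0) ≤ finSum f {i, i0} :=
          finSum_pair_le hS f {i, i0} i i0 (by simp) (by simp) hii0
        have h3 : finSum f {i, i0} ≤ μ (coneX X xs b0) := hlub.1 ⟨{i, i0}, rfl⟩
        exact absurd (lt_of_le_of_lt (le_trans h1 (le_trans h2 h3)) hb0) (lt_irrefl ε)
      -- so the lub is at most μ (coneX X xs b')
      have hub : μ (coneX X xs b') ∈ upperBounds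
          {s : S | ∃ F : Finset γ.ToType, s = finSum (fun i => μ ((e i : ↥𝒟) : Set ↥X)) F} := by
        rintro s ⟨F, rfl⟩
        have := finSum_le_of_almost_zero hS (fun i => μ ((e i : ↥𝒟) : Set ↥X)) i0 F
          (fun i _ => hz i)
        simpa only [hi0val] using this
      exact hlub.2 hub
    -- hence μ (coneX X xs b0) is a lower bound of all cone measures
    have hlb : μ (coneX X xs b0) ∈ lowerBounds
        (Set.range fun b : κ.ord.ToType => μ (coneX X xs b)) := by
      rintro v ⟨b, rfl⟩
      rcases le_total b b0 with hbb | hbb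
      · exact hμ.mono _ _ (hμ.open_mem _ (isOpen_coneX xs b0)) (hμ.open_mem _ (isOpen_coneX xs b))
          (coneX_mono xs hbb)
      · exact hconst b hbb
    exact absurd ((hGLB xs hxsU).2 hlb) (not_le.mpr (hxs b0))
  -- recursively defined sequence
  obtain ⟨a, ha⟩ : ∃ a : κ.ord.ToType → S, ∀ i, a i =
      if h : ∃ t : S, 0 < t ∧ ∀ j, j < i → t + t < a j then min h.choose (μ (coneX X xs i))
      else 0 := by
    refine ⟨IsWellFounded.fix ((· < ·) : κ.ord.ToType → κ.ord.ToType → Prop)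
      (fun i rec => if h : ∃ t : S, 0 < t ∧ ∀ j (hj : j < i), t + t < rec j hj
        then min h.choose (μ (coneX X xs i)) else 0), fun i => ?_⟩
    rw [IsWellFounded.fix_eq]
  have hgood : ∀ i : κ.ord.ToType, (∃ t : S, 0 < t ∧ ∀ j, j < i → t + t < a j) →
      0 < a i ∧ a i ≤ μ (coneX X xs i) ∧ ∀ j, j < i → a i + a i < a j := by
    intro i h
    have hai : a i = min h.choose (μ (coneX X xs i)) := by rw [ha i, dif_pos h]
    obtain ⟨ht, hlt⟩ := h.choose_spec
    refine ⟨by rw [hai]; exact lt_min ht (hxs i), by rw [hai]; exact min_le_right _ _, ?_⟩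
    intro j hj
    have h1 : a i ≤ h.choose := by rw [hai]; exact min_le_left _ _
    exact lt_of_le_of_lt (hS.add_le_add _ _ _ _ h1 h1) (hlt j hj)
  refine ⟨hdeg, ?_⟩
  by_cases hall : ∀ i : κ.ord.ToType, ∃ t : S, 0 < t ∧ ∀ j, j < i → t + t < a j
  · refine ⟨κ.ord, a, fun i => (hgood i (hall i)).1, ?_, fun i j hj => (hgood i (hall i)).2.2 j hj⟩
    intro ε hε
    obtain ⟨b, hb⟩ := hcoin ε hε
    exact ⟨b, le_of_lt (lt_of_le_of_lt (hgood b (hall b)).2.1 hb)⟩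
  · obtain ⟨i1, hi1⟩ := not_forall.mp hall
    haveI hwo : IsWellOrder κ.ord.ToType ((· < ·) : κ.ord.ToType → κ.ord.ToType → Prop) :=
      isWellOrder_lt
    have wf : WellFounded ((· < ·) : κ.ord.ToType → κ.ord.ToType → Prop) := IsWellFounded.wf
    set Bad : Set κ.ord.ToType := {i | ¬ ∃ t : S, 0 < t ∧ ∀ j, j < i → t + t < a j} with hBadDef
    have hBadne : Bad.Nonempty := ⟨i1, hi1⟩
    set i0 : κ.ord.ToType := wf.min Bad hBadne with hi0def
    have hi0Bad : ¬ ∃ t : S, 0 < t ∧ ∀ j, j < i0 → t + t < a j := wf.min_mem Bad hBadne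
    have hi0min : ∀ j, j < i0 → ∃ t : S, 0 < t ∧ ∀ k, k < j → t + t < a k := by
      intro j hj
      by_contra hc
      exact wf.not_lt_min Bad hc hj
    have hco : ∀ ε : S, 0 < ε → ∃ j, j < i0 ∧ a j ≤ ε := by
      intro ε hε
      obtain ⟨t, ht, htt⟩ := hstar ε hε
      by_contra hc
      push_neg at hc
      exact hi0Bad ⟨t, ht, fun j hj => lt_trans htt (hc j hj)⟩
    set δ : Ordinal.{0} :=
      Ordinal.typein ((· < ·) : κ.ord.ToType → κ.ord.ToType → Prop) i0 with hδdef
    have hδlt : δ < Ordinal.type ((· < ·) : κ.ord.ToType → κ.ord.ToType → Prop) :=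
      Ordinal.typein_lt_type _ i0
    set emb : δ.ToType → κ.ord.ToType := fun d =>
      Ordinal.enum ((· < ·) : κ.ord.ToType → κ.ord.ToType → Prop)
        ⟨(((Ordinal.ToType.mk (o := δ)).symm d : Set.Iio δ) : Ordinal),
          Set.mem_Iio.mpr (lt_trans ((Ordinal.ToType.mk (o := δ)).symm d).2 hδlt)⟩ with hembdef
    have hembtypein : ∀ d, Ordinal.typein ((· < ·) : κ.ord.ToType → κ.ord.ToType → Prop) (emb d)
        = (((Ordinal.ToType.mk (o := δ)).symm d : Set.Iio δ) : Ordinal) := fun d => Ordinal.typein_enum _ _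
    have hemblt : ∀ d, emb d < i0 := by
      intro d
      refine (Ordinal.typein_lt_typein ((· < ·) : κ.ord.ToType → κ.ord.ToType → Prop)).mp ?_
      rw [hembtypein d, ← hδdef]
      exact ((Ordinal.ToType.mk (o := δ)).symm d).2
    have hembmono : ∀ d d' : δ.ToType, d' < d → emb d' < emb d := by
      intro d d' hdd
      refine (Ordinal.typein_lt_typein ((· < ·) : κ.ord.ToType → κ.ord.ToType → Prop)).mp ?_
      rw [hembtypein d', hembtypein d]
      exact Subtype.coe_lt_coe.mpr ((OrderIso.lt_iff_lt (Ordinal.ToType.mk (o := δ)).symm).mpr hdd)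
    have hembsurj : ∀ jj, jj < i0 → ∃ d, emb d = jj := by
      intro jj hjj
      have h1 : Ordinal.typein ((· < ·) : κ.ord.ToType → κ.ord.ToType → Prop) jj < δ := by
        rw [hδdef]
        exact (Ordinal.typein_lt_typein ((· < ·) : κ.ord.ToType → κ.ord.ToType → Prop)).mpr hjj
      refine ⟨(Ordinal.ToType.mk (o := δ)) ⟨Ordinal.typein ((· < ·) : κ.ord.ToType → κ.ord.ToType → Prop) jj,
        (show _ ∈ Set.Iio δ from h1)⟩, ?_⟩
      have h2 := hembtypein ((Ordinal.ToType.mk (o := δ)) ⟨Ordinal.typein ((· < ·) : κ.ord.ToType → κ.ord.ToType → Prop) jj,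
        (show _ ∈ Set.Iio δ from h1)⟩)
      rw [OrderIso.symm_apply_apply] at h2
      exact Ordinal.typein_injective _ h2
    refine ⟨δ, fun d => a (emb d), fun d => (hgood (emb d) (hi0min (emb d) (hemblt d))).1, ?_, ?_⟩
    · intro ε hε
      obtain ⟨jj, hjj, hjja⟩ := hco ε hε
      obtain ⟨d, hd⟩ := hembsurj jj hjj
      exact ⟨d, by show a (emb d) ≤ ε; rw [hd]; exact hjja⟩
    · intro d d' hdd
      exact (hgood (emb d) (hi0min (emb d) (hemblt d))).2.2 (emb d') (hembmono d d' hdd)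

end mainproof2

/-- if `S` is not `0`-continuous and `(X, 𝔐, μ)` is a weak `λ⁺`-measure space on
some `X ⊆ ᵏλ` of weight at most `λ`, then every open `U` of positive measure contains a point
that is either non-measurable or of positive measure. -/
theorem statement_6 (κ lam : Cardinal) (hκ : κ.IsRegular) (hκlam : κ ≤ lam) (hlam : ℵ₀ ≤ lam)
    (X : Set (GSeq κ.ord.ToType lam.ord.ToType)) (hw : tweight ↥X ≤ lam)
    (S : Type) [AddMonoid S] [LinearOrder S] (hS : IsPTOM S)
    (hnzc : ¬ ZeroContinuous S)
    (M : Set (Set ↥X)) (μ : Set ↥X → S)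
    (hμ : IsWeakMeasureSpace ↥X lam S M μ)
    (U : Set ↥X) (hU : IsOpen U) (hUpos : 0 < μ U) :
    ∃ x ∈ U, ({x} : Set ↥X) ∉ M ∨ 0 < μ {x} := by
  by_contra hcon
  push_neg at hcon
  have hH : ∀ x ∈ U, {x} ∈ M ∧ μ {x} = 0 := by
    intro x hx
    obtain ⟨h1, h2⟩ := hcon x hx
    exact ⟨h1, le_antisymm h2 (hS.zero_le _)⟩
  exact hnzc (main_contra hκ hκlam hw hS hμ U hU hUpos hH)

end
end

section
/- Let κ and λ be infinite cardinals with κ regular and κ ≤ λ, let X ⊆ ᵏλ be a subspace of weight at most λ, and let S be a positively totally ordered monoid such that Deg(S) is infinite and S⁺ contains a coinitial sequence (a_i)_{i<δ} which is nowhere Archimedean decreasing, i.e., a_i ≪ a_j whenever j < i < δ. Let (X, 𝔐, μ) be a weak λ⁺-measure space with μ taking values in S, and let U ⊆ X be an open set with μ(U) > 0. Then there is x ∈ U such that either {x} ∉ 𝔐 or μ({x}) > 0. -/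
open Cardinal Set

noncomputable section

namespace St7

variable {ι A : Type} [LinearOrder ι]

def cone (x : GSeq ι A) (b : ι) : Set (GSeq ι A) := {y | ∀ i, i < b → y i = x i}

lemma mem_cone_self (x : GSeq ι A) (b : ι) : x ∈ cone x b := fun _ _ => rfl

lemma isOpen_cone (x : GSeq ι A) (b : ι) : IsOpen (cone x b) :=
  TopologicalSpace.GenerateOpen.basic _ ⟨x, b, rfl⟩

lemma cone_anti {x : GSeq ι A} {b b' : ι} (h : b ≤ b') : cone x b' ⊆ cone x b :=
  fun _ hy i hi => hy i (lt_of_lt_of_le hi h)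

lemma cone_eq_of_mem {x y : GSeq ι A} {b : ι} (h : y ∈ cone x b) : cone y b = cone x b := by
  ext z
  constructor <;> intro hz i hi
  · exact (hz i hi).trans (h i hi)
  · exact (hz i hi).trans (h i hi).symm

lemma cone_subset_of_inter {x y : GSeq ι A} {b c : ι} (hbc : b ≤ c)
    (h : (cone x b ∩ cone y c).Nonempty) : cone y c ⊆ cone x b := by
  obtain ⟨z, hzx, hzy⟩ := h
  intro w hw i hi
  exact (hw i (lt_of_lt_of_le hi hbc)).trans
    ((hzy i (lt_of_lt_of_le hi hbc)).symm.trans (hzx i hi))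

lemma exists_cone_subset [Nonempty ι] {V : Set (GSeq ι A)} (hV : IsOpen V) :
    ∀ x ∈ V, ∃ b, cone x b ⊆ V := by
  have hV' : TopologicalSpace.GenerateOpen
      {C : Set (GSeq ι A) | ∃ (x : ι → A) (b : ι),
        C = {y : GSeq ι A | ∀ i, i < b → y i = x i}} V := hV
  clear hV
  induction hV' with
  | basic C hC =>
    rintro x hx
    obtain ⟨z, b, rfl⟩ := hC
    exact ⟨b, fun y hy i hi => (hy i hi).trans (hx i hi)⟩
  | univ => exact fun x _ => ⟨Classical.arbitrary ι, fun _ _ => trivial⟩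
  | inter s t _ _ ihs iht =>
    intro x hx
    obtain ⟨b1, h1⟩ := ihs x hx.1
    obtain ⟨b2, h2⟩ := iht x hx.2
    exact ⟨max b1 b2, fun y hy =>
      ⟨h1 (cone_anti (le_max_left _ _) hy), h2 (cone_anti (le_max_right _ _) hy)⟩⟩
  | sUnion Sc _ ih =>
    intro x hx
    obtain ⟨t, ht, hxt⟩ := hx
    obtain ⟨b, hb⟩ := ih t ht x hxt
    exact ⟨b, hb.trans (subset_sUnion_of_mem ht)⟩

lemma isOpen_coneX {X : Set (GSeq ι A)} (x : ↥X) (b : ι) :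
    IsOpen (Subtype.val ⁻¹' cone (x : GSeq ι A) b : Set ↥X) :=
  (isOpen_cone _ _).preimage continuous_subtype_val

lemma exists_cone_subset_subtype [Nonempty ι] {X : Set (GSeq ι A)} {V : Set ↥X}
    (hV : IsOpen V) (x : ↥X) (hx : x ∈ V) :
    ∃ b, Subtype.val ⁻¹' cone (x : GSeq ι A) b ⊆ V := by
  obtain ⟨W, hW, rfl⟩ := isOpen_induced_iff.mp hV
  obtain ⟨b, hb⟩ := exists_cone_subset hW x.1 hx
  exact ⟨b, fun y hy => hb hy⟩

lemma list_sum_le {S : Type} [AddMonoid S] [LinearOrder S] (hS : IsPTOM S) (c : S) :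
    ∀ l : List S, (∀ t ∈ l, t ≤ c) → l.sum ≤ l.length • c := by
  intro l
  induction l with
  | nil => intro _; simp
  | cons hd tl ih =>
    intro h
    have h1 : hd + tl.sum ≤ c + tl.length • c :=
      hS.add_le_add _ _ _ _ (h hd (by simp)) (ih fun t ht => h t (by simp [ht]))
    simpa [List.sum_cons, succ_nsmul'] using h1

end St7

/-- if `S` has infinite degree and `S⁺` contains a coinitial, nowhere Archimedean
decreasing sequence, and `(X, 𝔐, μ)` is a weak `λ⁺`-measure space on some `X ⊆ ᵏλ` of weight at
most `λ`, then every open `U` of positive measure contains a point that is either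
non-measurable or of positive measure. -/
theorem statement_7 (κ lam : Cardinal) (hκ : κ.IsRegular) (hκlam : κ ≤ lam) (hlam : ℵ₀ ≤ lam)
    (X : Set (GSeq κ.ord.ToType lam.ord.ToType)) (hw : tweight ↥X ≤ lam)
    (S : Type) [AddMonoid S] [LinearOrder S] (hS : IsPTOM S)
    (hdeg : ℵ₀ ≤ degree S)
    (δ : Ordinal) (a : δ.ToType → S)
    (hapos : ∀ i, 0 < a i)
    (hacoin : ∀ ε : S, 0 < ε → ∃ i, a i ≤ ε)
    (hana : ∀ i j : δ.ToType, j < i → ∀ n : ℕ, n • a i < a j)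
    (M : Set (Set ↥X)) (μ : Set ↥X → S)
    (hμ : IsWeakMeasureSpace ↥X lam S M μ)
    (U : Set ↥X) (hU : IsOpen U) (hUpos : 0 < μ U) :
    ∃ x ∈ U, ({x} : Set ↥X) ∉ M ∨ 0 < μ {x} := by
  classical
  by_contra hcon
  push_neg at hcon
  have hzero : ∀ x ∈ U, {x} ∈ M ∧ μ {x} = 0 := fun x hx =>
    ⟨(hcon x hx).1, le_antisymm (hcon x hx).2 (hS.zero_le _)⟩
  haveI hne_ι : Nonempty κ.ord.ToType := by
    refine Ordinal.toType_nonempty_iff_ne_zero.mpr fun h => ?_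
    have : κ = 0 := by rw [← Cardinal.card_ord κ, h, Ordinal.card_zero]
    exact absurd this (hκ.pos.ne')
  -- the cones in the subspace X
  set C : ↥X → κ.ord.ToType → Set ↥X :=
    fun x b => Subtype.val ⁻¹' St7.cone (x : GSeq κ.ord.ToType lam.ord.ToType) b with hCdef
  have hCopen : ∀ (x : ↥X) b, IsOpen (C x b) := fun x b => St7.isOpen_coneX x b
  have hCM : ∀ (x : ↥X) b, C x b ∈ M := fun x b => hμ.open_mem _ (hCopen x b)
  have hCmem : ∀ (x : ↥X) b, x ∈ C x b := fun x b => St7.mem_cone_self _ b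
  have hCanti : ∀ (x : ↥X) {b b'}, b ≤ b' → C x b' ⊆ C x b :=
    fun x _ _ h => Set.preimage_mono (St7.cone_anti h)
  -- GLB of cone measures is 0
  have hglb : ∀ x ∈ U, IsGLB (Set.range fun b => μ (C x b)) 0 := by
    intro x hx
    have h := hμ.point_reg x κ.ord (fun b => C x b) (hzero x hx).1
      (by rw [Cardinal.card_ord]; exact hκlam)
      (fun b => ⟨hCopen x b, hCmem x b⟩)
      (fun V hV hxV => St7.exists_cone_subset_subtype hV x hxV)
    rwa [(hzero x hx).2] at h
  -- existence of small cones inside U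
  have hsmall : ∀ ε : S, 0 < ε → ∀ x ∈ U, ∃ b, C x b ⊆ U ∧ μ (C x b) < ε := by
    intro ε hε x hx
    obtain ⟨bU, hbU⟩ := St7.exists_cone_subset_subtype hU x hx
    have hnl : ε ∉ lowerBounds (Set.range fun b => μ (C x b)) := fun h =>
      absurd ((hglb x hx).2 h) (not_le.mpr hε)
    have hex : ∃ b, μ (C x b) < ε := by
      by_contra h
      push_neg at h
      exact hnl (by rintro s ⟨b, rfl⟩; exact h b)
    obtain ⟨b, hb⟩ := hex
    refine ⟨max bU b, (hCanti x (le_max_left _ _)).trans hbU, ?_⟩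
    exact lt_of_le_of_lt
      (hμ.mono _ _ (hCM x _) (hCM x _) (hCanti x (le_max_right _ _))) hb
  -- the three indices
  obtain ⟨i₀, hi₀⟩ := hacoin (μ U) hUpos
  have hnext : ∀ i : δ.ToType, ∃ j, i < j := by
    intro i
    by_contra h
    push_neg at h
    have hmin : ∀ ε : S, 0 < ε → a i ≤ ε := by
      intro ε hε
      obtain ⟨j, hj⟩ := hacoin ε hε
      rcases eq_or_lt_of_le (h j) with rfl | hji
      · exact hj
      · exact le_trans (le_of_lt (by simpa using hana i j hji 1)) hj
    have hdle : degree S ≤ 1 := by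
      have h1 : degree S ≤ #↥({a i} : Set S) :=
        ciInf_le' (fun A : {A : Set S // (∀ a ∈ A, 0 < a) ∧ ∀ ε : S, 0 < ε → ∃ a ∈ A, a ≤ ε} => #↥(A.1)) ⟨{a i}, fun b hb => by rw [Set.mem_singleton_iff] at hb; subst hb; exact hapos i,
          fun ε hε => ⟨a i, Set.mem_singleton _, hmin ε hε⟩⟩
      simpa using h1
    exact absurd (hdeg.trans hdle) (by simp)
  obtain ⟨i₁, hi₁⟩ := hnext i₀
  obtain ⟨i₂, hi₂⟩ := hnext i₁
  -- choose minimal small cones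
  have hex : ∀ x : ↥X, x ∈ U → ∃ b, (C x b ⊆ U ∧ μ (C x b) < a i₂) ∧
      ∀ b', (C x b' ⊆ U ∧ μ (C x b') < a i₂) → b ≤ b' := by
    intro x hx
    obtain ⟨b₀, hb₀⟩ := hsmall _ (hapos i₂) x hx
    obtain ⟨b, hb, hbmin⟩ := wellFounded_lt.has_min
      {b | C x b ⊆ U ∧ μ (C x b) < a i₂} ⟨b₀, hb₀⟩
    exact ⟨b, hb, fun b' hb' => not_lt.mp (hbmin b' hb')⟩
  choose β hβ hβmin using hex
  -- key disjointness claim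
  have haux : ∀ (x : ↥X) (hx : x ∈ U) (y : ↥X) (hy : y ∈ U), β x hx ≤ β y hy →
      (C x (β x hx) ∩ C y (β y hy)).Nonempty → C x (β x hx) = C y (β y hy) := by
    intro x hx y hy hle ⟨z, hzx, hzy⟩
    have hzx' : (z : GSeq κ.ord.ToType lam.ord.ToType) ∈
        St7.cone (x : GSeq κ.ord.ToType lam.ord.ToType) (β x hx) := hzx
    have hzy' : (z : GSeq κ.ord.ToType lam.ord.ToType) ∈
        St7.cone (y : GSeq κ.ord.ToType lam.ord.ToType) (β y hy) := hzy
    have hsub : St7.cone (y : GSeq κ.ord.ToType lam.ord.ToType) (β y hy) ⊆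
        St7.cone (x : GSeq κ.ord.ToType lam.ord.ToType) (β x hx) :=
      St7.cone_subset_of_inter hle ⟨z.1, hzx', hzy'⟩
    have hymem : (y : GSeq κ.ord.ToType lam.ord.ToType) ∈
        St7.cone (x : GSeq κ.ord.ToType lam.ord.ToType) (β x hx) :=
      hsub (St7.mem_cone_self _ _)
    have hcones : St7.cone (y : GSeq κ.ord.ToType lam.ord.ToType) (β x hx) =
        St7.cone (x : GSeq κ.ord.ToType lam.ord.ToType) (β x hx) :=
      St7.cone_eq_of_mem hymem
    have hCeq : C y (β x hx) = C x (β x hx) := by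
      simp only [hCdef]; rw [hcones]
    have hgood : C y (β x hx) ⊆ U ∧ μ (C y (β x hx)) < a i₂ := by
      rw [hCeq]; exact hβ x hx
    have : β y hy ≤ β x hx := hβmin y hy _ hgood
    have heq : β x hx = β y hy := le_antisymm hle this
    rw [← heq, ← hCeq, heq]
  have hkey : ∀ (x : ↥X) (hx : x ∈ U) (y : ↥X) (hy : y ∈ U),
      (C x (β x hx) ∩ C y (β y hy)).Nonempty → C x (β x hx) = C y (β y hy) := by
    intro x hx y hy hne
    rcases le_total (β x hx) (β y hy) with h | h
    · exact haux x hx y hy h hne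
    · exact (haux y hy x hx h (by rwa [Set.inter_comm] at hne)).symm
  -- the family of minimal small cones
  set 𝒟 : Set (Set ↥X) := {V | ∃ x, ∃ hx : x ∈ U, V = C x (β x hx)} with h𝒟def
  have hsub𝒟 : ∀ V ∈ 𝒟, V ⊆ U := by rintro V ⟨x, hx, rfl⟩; exact (hβ x hx).1
  have hlt𝒟 : ∀ V ∈ 𝒟, μ V < a i₂ := by rintro V ⟨x, hx, rfl⟩; exact (hβ x hx).2
  have hopen𝒟 : ∀ V ∈ 𝒟, IsOpen V := by rintro V ⟨x, hx, rfl⟩; exact hCopen x _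
  have hne𝒟 : ∀ V ∈ 𝒟, V.Nonempty := by rintro V ⟨x, hx, rfl⟩; exact ⟨x, hCmem x _⟩
  have hdisj𝒟 : ∀ V ∈ 𝒟, ∀ W ∈ 𝒟, V ≠ W → Disjoint V W := by
    rintro V ⟨x, hx, rfl⟩ W ⟨y, hy, rfl⟩ hVW
    rw [Set.disjoint_iff_inter_eq_empty]
    by_contra h
    exact hVW (hkey x hx y hy (Set.nonempty_iff_ne_empty.mpr h))
  -- cardinality of the family via the weight
  have hBas : ∃ B : {B : Set (Set ↥X) // TopologicalSpace.IsTopologicalBasis B},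
      #↥(B.1) ≤ lam := by
    haveI : Nonempty {B : Set (Set ↥X) // TopologicalSpace.IsTopologicalBasis B} :=
      ⟨⟨_, TopologicalSpace.isTopologicalBasis_opens⟩⟩
    have hmem : tweight ↥X ∈ Set.range
        fun B : {B : Set (Set ↥X) // TopologicalSpace.IsTopologicalBasis B} => #↥(B.1) :=
      csInf_mem (Set.range_nonempty _)
    obtain ⟨B, hB⟩ := hmem
    exact ⟨B, hB.le.trans hw⟩
  obtain ⟨⟨B, hB⟩, hBcard⟩ := hBas
  have hcard𝒟 : #↥𝒟 ≤ lam := by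
    have hpick : ∀ V : ↥𝒟, ∃ b, b ∈ B ∧ b.Nonempty ∧ b ⊆ V.1 := by
      intro V
      obtain ⟨x, hxV⟩ := hne𝒟 V.1 V.2
      obtain ⟨b, hbB, hxb, hbV⟩ := hB.exists_subset_of_mem_open hxV (hopen𝒟 V.1 V.2)
      exact ⟨b, hbB, ⟨x, hxb⟩, hbV⟩
    choose f hfB hfne hfsub using hpick
    have hinj : Function.Injective fun V : ↥𝒟 => (⟨f V, hfB V⟩ : ↥B) := by
      intro V W h
      simp only [Subtype.mk.injEq] at h
      obtain ⟨x, hx⟩ := hfne V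
      have hxV : x ∈ V.1 := hfsub V hx
      have hxW : x ∈ W.1 := hfsub W (h ▸ hx)
      by_contra hVW
      have : Disjoint V.1 W.1 := hdisj𝒟 V.1 V.2 W.1 W.2
        (fun hvw => hVW (Subtype.ext hvw))
      exact Set.disjoint_left.mp this hxV hxW
    exact (Cardinal.mk_le_of_injective hinj).trans hBcard
  -- re-index the family by an ordinal
  have hmkγ : #(((#↥𝒟).ord).ToType) = #↥𝒟 := by
    rw [Cardinal.mk_toType, Cardinal.card_ord]
  obtain ⟨e⟩ : Nonempty ((((#↥𝒟).ord).ToType) ≃ ↥𝒟) := Cardinal.eq.mp hmkγ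
  set Afam : ((#↥𝒟).ord).ToType → Set ↥X := fun i => (e i).1 with hAfam
  have hpair : Pairwise (Function.onFun Disjoint Afam) := by
    intro i j hij
    refine hdisj𝒟 _ (e i).2 _ (e j).2 fun h => hij (e.injective (Subtype.ext h))
  have hUnion : ⋃ i, Afam i = U := by
    apply Set.Subset.antisymm
    · exact Set.iUnion_subset fun i => hsub𝒟 _ (e i).2
    · intro x hx
      have hmem : C x (β x hx) ∈ 𝒟 := ⟨x, hx, rfl⟩
      refine Set.mem_iUnion.mpr ⟨e.symm ⟨_, hmem⟩, ?_⟩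
      show x ∈ (e (e.symm ⟨_, hmem⟩)).1
      rw [e.apply_symm_apply]
      exact hCmem x _
  have hlub := hμ.additive (#↥𝒟).ord Afam
    (by rw [Cardinal.card_ord]; exact hcard𝒟)
    (fun i => hμ.open_mem _ (hopen𝒟 _ (e i).2)) hpair
  rw [hUnion] at hlub
  -- the upper bound
  have hub : a i₁ ∈ upperBounds
      {s : S | ∃ F : Finset (((#↥𝒟).ord).ToType), s = finSum (fun i => μ (Afam i)) F} := by
    rintro s ⟨F, rfl⟩
    have hmem : ∀ t ∈ (F.sort (· ≤ ·)).map (fun i => μ (Afam i)), t ≤ a i₂ := by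
      intro t ht
      rw [List.mem_map] at ht
      obtain ⟨i, _, rfl⟩ := ht
      exact (hlt𝒟 _ (e i).2).le
    have h1 : finSum (fun i => μ (Afam i)) F ≤
        ((F.sort (· ≤ ·)).map (fun i => μ (Afam i))).length • a i₂ :=
      St7.list_sum_le hS _ _ hmem
    exact (h1.trans_lt (hana i₂ i₁ hi₂ _)).le
  have h1 : μ U ≤ a i₁ := hlub.2 hub
  have h2 : a i₁ < a i₀ := by simpa using hana i₁ i₀ hi₁ 1
  exact absurd ((h1.trans_lt h2).trans_le hi₀) (lt_irrefl _)


end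
end
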